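/- arXiv:0906.4238 — 13 statements merged into one kernel-verified Lean document; each statement's English description precedes it below -/
import Mathlib

section
/- Let d ≥ 1 and let K and L be nonempty compact convex subsets of ℝ^d such that K ∪ L is convex. Then for all points x, y ∈ ℝ^d, 𝟙([x,y] ∩ K ≠ ∅) + 𝟙([x,y] ∩ L ≠ ∅) = 𝟙([x,y] ∩ (K ∪ L) ≠ ∅) + 𝟙([x,y] ∩ (K ∩ L) ≠ ∅). -/
open scoped Classical

theorem segment_indicator_valuation
    (d : ℕ) (hd : 1 ≤ d)
    (K L : Set (EuclideanSpace ℝ (Fin d)))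
    (hKne : K.Nonempty) (hLne : L.Nonempty)
    (hKcp : IsCompact K) (hLcp : IsCompact L)
    (hKcv : Convex ℝ K) (hLcv : Convex ℝ L)
    (hKLcv : Convex ℝ (K ∪ L))
    (x y : EuclideanSpace ℝ (Fin d)) :
    (if (segment ℝ x y ∩ K).Nonempty then (1 : ℝ) else 0)
      + (if (segment ℝ x y ∩ L).Nonempty then (1 : ℝ) else 0)
    = (if (segment ℝ x y ∩ (K ∪ L)).Nonempty then (1 : ℝ) else 0)
      + (if (segment ℝ x y ∩ (K ∩ L)).Nonempty then (1 : ℝ) else 0) := by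
  have key : (segment ℝ x y ∩ K).Nonempty → (segment ℝ x y ∩ L).Nonempty →
      (segment ℝ x y ∩ (K ∩ L)).Nonempty := by
    rintro ⟨p, hps, hpK⟩ ⟨q, hqs, hqL⟩
    have hsub : segment ℝ p q ⊆ segment ℝ x y :=
      (convex_segment x y).segment_subset hps hqs
    have hcov : segment ℝ p q ⊆ K ∪ L :=
      hKLcv.segment_subset (Set.mem_union_left _ hpK) (Set.mem_union_right _ hqL)
    have hpc : IsPreconnected (segment ℝ p q) :=
      (convex_segment p q).isPreconnected
    have := isPreconnected_closed_iff.mp hpc K L hKcp.isClosed hLcp.isClosed hcov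
      ⟨p, left_mem_segment ℝ p q, hpK⟩ ⟨q, right_mem_segment ℝ p q, hqL⟩
    obtain ⟨z, hz, hzKL⟩ := this
    exact ⟨z, hsub hz, hzKL⟩
  have hunion : (segment ℝ x y ∩ (K ∪ L)).Nonempty ↔
      (segment ℝ x y ∩ K).Nonempty ∨ (segment ℝ x y ∩ L).Nonempty := by
    rw [Set.inter_union_distrib_left, Set.union_nonempty]
  have hintK : (segment ℝ x y ∩ (K ∩ L)).Nonempty →
      (segment ℝ x y ∩ K).Nonempty ∧ (segment ℝ x y ∩ L).Nonempty := by
    rintro ⟨z, hzs, hzK, hzL⟩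
    exact ⟨⟨z, hzs, hzK⟩, ⟨z, hzs, hzL⟩⟩
  by_cases hK : (segment ℝ x y ∩ K).Nonempty <;>
    by_cases hL : (segment ℝ x y ∩ L).Nonempty
  · rw [if_pos hK, if_pos hL, if_pos (hunion.mpr (Or.inl hK)), if_pos (key hK hL)]
  · rw [if_pos hK, if_neg hL, if_pos (hunion.mpr (Or.inl hK)),
      if_neg (fun h => hL (hintK h).2)]
  · rw [if_neg hK, if_pos hL, if_pos (hunion.mpr (Or.inr hL)),
      if_neg (fun h => hK (hintK h).1)]
    ring
  · rw [if_neg hK, if_neg hL, if_neg (fun h => ((hunion.mp h).elim hK hL)),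
      if_neg (fun h => hK (hintK h).1)]
end

section
/- Let d ≥ 2 and let K ⊆ ℝ^d be a compact convex set contained in an affine subspace of dimension at most d − 2. Then the set {(x, y) ∈ ℝ^d × ℝ^d : [x,y] ∩ K ≠ ∅} has Lebesgue measure zero in ℝ^d × ℝ^d. -/
open MeasureTheory

theorem measure_zero_segment_meets_lowdim_convex
    (d : ℕ) (hd : 2 ≤ d) (K : Set (EuclideanSpace ℝ (Fin d)))
    (hKcp : IsCompact K) (hKcv : Convex ℝ K)
    (A : AffineSubspace ℝ (EuclideanSpace ℝ (Fin d)))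
    (hKA : K ⊆ (A : Set (EuclideanSpace ℝ (Fin d))))
    (hdim : Module.finrank ℝ A.direction ≤ d - 2) :
    volume {p : EuclideanSpace ℝ (Fin d) × EuclideanSpace ℝ (Fin d) |
      (segment ℝ p.1 p.2 ∩ K).Nonempty} = 0 := by
  classical
  rcases Set.eq_empty_or_nonempty K with hKe | ⟨a, haK⟩
  · rw [hKe]; simp
  have haA : a ∈ A := hKA haK
  have hfinE : Module.finrank ℝ (EuclideanSpace ℝ (Fin d)) = d := finrank_euclideanSpace_fin
  have hWne : A.direction ≠ ⊤ := by
    intro h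
    rw [h, finrank_top, hfinE] at hdim
    omega
  -- pick a unit vector orthogonal to the direction of A
  obtain ⟨v, hvW, hv0⟩ : ∃ v : EuclideanSpace ℝ (Fin d), v ∈ A.directionᗮ ∧ v ≠ 0 :=
    Submodule.exists_mem_ne_zero_of_ne_bot (by
      rwa [Ne, Submodule.orthogonal_eq_bot_iff])
  set u : EuclideanSpace ℝ (Fin d) := ‖v‖⁻¹ • v with hu_def
  have hu0 : u ≠ 0 := by
    simp only [hu_def, ne_eq, smul_eq_zero, inv_eq_zero, norm_eq_zero]
    tauto
  have huW : u ∈ A.directionᗮ := A.directionᗮ.smul_mem _ hvW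
  have hunorm : ‖u‖ = 1 := by
    rw [hu_def, norm_smul, norm_inv, norm_norm, inv_mul_cancel₀ (norm_ne_zero_iff.2 hv0)]
  have huu : (inner ℝ u u : ℝ) = 1 := by
    rw [real_inner_self_eq_norm_sq, hunorm]; norm_num
  -- the submodule of parameters
  set V' : Submodule ℝ (EuclideanSpace ℝ (Fin d)) := A.direction ⊔ (ℝ ∙ u) with hV'def
  have hV'ne : V' ≠ ⊤ := by
    intro h
    have h1 : Module.finrank ℝ V' ≤
        Module.finrank ℝ A.direction + Module.finrank ℝ (ℝ ∙ u) :=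
      Submodule.finrank_add_le_finrank_add_finrank A.direction (ℝ ∙ u)
    rw [finrank_span_singleton hu0] at h1
    rw [h, finrank_top, hfinE] at h1
    omega
  set V : Submodule ℝ (EuclideanSpace ℝ (Fin d) × EuclideanSpace ℝ (Fin d)) :=
    (⊤ : Submodule ℝ (EuclideanSpace ℝ (Fin d))).prod V' with hVdef
  have hVne : V ≠ ⊤ := by
    intro h
    obtain ⟨z, hz⟩ : ∃ z : EuclideanSpace ℝ (Fin d), z ∉ V' := by
      by_contra hc
      push_neg at hc
      exact hV'ne (Submodule.eq_top_iff'.2 hc)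
    have : ((0 : EuclideanSpace ℝ (Fin d)), z) ∈ V := h ▸ Submodule.mem_top
    exact hz this.2
  -- the smooth map
  set G : EuclideanSpace ℝ (Fin d) × EuclideanSpace ℝ (Fin d) →
      EuclideanSpace ℝ (Fin d) × EuclideanSpace ℝ (Fin d) := fun p =>
    (p.1, p.1 + (inner ℝ p.2 u : ℝ) • (a + p.2 - (inner ℝ p.2 u : ℝ) • u - p.1)) with hGdef
  have hGdiff : Differentiable ℝ G := by
    have h1 : Differentiable ℝ fun p :
        EuclideanSpace ℝ (Fin d) × EuclideanSpace ℝ (Fin d) => (inner ℝ p.2 u : ℝ) :=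
      (differentiable_snd).inner ℝ (differentiable_const u)
    refine differentiable_fst.prodMk ?_
    exact differentiable_fst.add <| h1.smul <|
      ((differentiable_const a).add differentiable_snd |>.sub (h1.smul
        (differentiable_const u))).sub differentiable_fst
  -- inclusion
  have hincl : {p : EuclideanSpace ℝ (Fin d) × EuclideanSpace ℝ (Fin d) |
      (segment ℝ p.1 p.2 ∩ K).Nonempty} ⊆
      (K ×ˢ (Set.univ : Set (EuclideanSpace ℝ (Fin d)))) ∪
        G '' (V : Set (EuclideanSpace ℝ (Fin d) × EuclideanSpace ℝ (Fin d))) := by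
    rintro ⟨x, y⟩ ⟨k, hkseg, hkK⟩
    obtain ⟨t1, t2, ht1, ht2, hsum, hk⟩ := hkseg
    rcases eq_or_lt_of_le ht2 with h0 | h0
    · -- t2 = 0, so k = x ∈ K
      left
      have ht1' : t1 = 1 := by linarith
      have : k = x := by rw [← hk, ← h0, ht1']; simp
      exact ⟨this ▸ hkK, Set.mem_univ _⟩
    · right
      have hkA : k ∈ A := hKA hkK
      have hw : k - a ∈ A.direction := by
        simpa using AffineSubspace.vsub_mem_direction hkA haA
      set z : EuclideanSpace ℝ (Fin d) := (k - a) + t2⁻¹ • u with hzdef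
      have hzV' : z ∈ V' := Submodule.add_mem_sup hw
        (Submodule.smul_mem _ _ (Submodule.mem_span_singleton_self u))
      have hinner : (inner ℝ z u : ℝ) = t2⁻¹ := by
        rw [hzdef, inner_add_left, inner_smul_left]
        have : (inner ℝ (k - a) u : ℝ) = 0 :=
          (Submodule.mem_orthogonal A.direction u).1 huW _ hw
        rw [this, huu]
        simp
      have hsnd : x + (inner ℝ z u : ℝ) • (a + z - (inner ℝ z u : ℝ) • u - x) = y := by
        have hzw : a + z - t2⁻¹ • u = k := by
          rw [hzdef]
          abel
        rw [hinner, hzw, ← hk]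
        have ht1' : t1 = 1 - t2 := by linarith
        have h2 : t1 • x + t2 • y - x = t2 • (y - x) := by
          rw [ht1', sub_smul, one_smul, smul_sub]
          abel
        rw [h2, smul_smul, inv_mul_cancel₀ (ne_of_gt h0), one_smul]
        abel
      refine ⟨(x, z), ⟨Submodule.mem_top, hzV'⟩, ?_⟩
      simp only [hGdef]
      rw [Prod.mk.injEq]
      exact ⟨rfl, hsnd⟩
  -- measure of the two pieces
  have hAne : A ≠ ⊤ := by
    intro h
    rw [h, AffineSubspace.direction_top, finrank_top, hfinE] at hdim
    omega
  have hK0 : volume K = 0 :=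
    measure_mono_null hKA (Measure.addHaar_affineSubspace volume A hAne)
  have hVmeas : MeasurableSet
      (V : Set (EuclideanSpace ℝ (Fin d) × EuclideanSpace ℝ (Fin d))) :=
    (Submodule.closed_of_finiteDimensional V).measurableSet
  haveI : (Measure.prod (volume : Measure (EuclideanSpace ℝ (Fin d)))
      (volume : Measure (EuclideanSpace ℝ (Fin d)))).IsAddHaarMeasure :=
    Measure.prod.instIsAddHaarMeasure volume volume
  rw [Measure.volume_eq_prod]
  refine measure_mono_null hincl (measure_union_null ?_ ?_)
  · rw [Measure.prod_prod, hK0, zero_mul]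
  · have hV0 : (Measure.prod volume volume)
        (V : Set (EuclideanSpace ℝ (Fin d) × EuclideanSpace ℝ (Fin d))) = 0 :=
      Measure.addHaar_submodule _ V hVne
    have hle := addHaar_image_le_lintegral_abs_det_fderiv (Measure.prod volume volume) hVmeas
      (fun x _ => ((hGdiff x).hasFDerivAt).hasFDerivWithinAt)
    rw [Measure.restrict_eq_zero.2 hV0, lintegral_zero_measure] at hle
    exact le_antisymm hle zero_le
end

section
/- Let K ⊂ ℝ^d be a compact convex set, let X ⊆ ℝ^d be a locally finite set, and let δ > 0. Assume that every point y ∈ ℝ^d with dist(y, ∂K) ≤ 3δ satisfies dist(y, X) ≤ δ. Then for every x ∈ X with dist(x, ∂K) ≤ δ, the Voronoi cell v_X(x) is contained in the closed ball of radius δ centered at x. -/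
open Metric

/-- The Voronoi cell of `x` with respect to the point set `X`:
all points at least as close to `x` as to any point of `X`. -/
def voronoiCell {d : ℕ} (X : Set (EuclideanSpace ℝ (Fin d)))
    (x : EuclideanSpace ℝ (Fin d)) : Set (EuclideanSpace ℝ (Fin d)) :=
  {z | ∀ y ∈ X, dist z x ≤ dist z y}

theorem voronoiCell_subset_closedBall_of_dense_near_boundary
    {d : ℕ} (K X : Set (EuclideanSpace ℝ (Fin d)))
    (hKcp : IsCompact K) (hKcv : Convex ℝ K)
    (hXlf : ∀ C : Set (EuclideanSpace ℝ (Fin d)), IsCompact C → (X ∩ C).Finite)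
    (δ : ℝ) (hδ : 0 < δ)
    (hdense : ∀ y : EuclideanSpace ℝ (Fin d),
      infDist y (frontier K) ≤ 3 * δ → infDist y X ≤ δ) :
    ∀ x ∈ X, infDist x (frontier K) ≤ δ →
      voronoiCell X x ⊆ closedBall x δ := by
  intro x hxX hxK z hz
  rw [mem_closedBall]
  by_contra hzd
  push_neg at hzd
  have hr : 0 < dist z x := lt_trans hδ hzd
  set s : ℝ := min (2 * δ) (dist z x) with hs
  have hspos : δ < s := lt_min (by linarith) hzd
  have hsle : s ≤ 2 * δ := min_le_left _ _
  have hsr : s ≤ dist z x := min_le_right _ _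
  set t : ℝ := s / dist z x with htdef
  have ht0 : 0 ≤ t := div_nonneg (by linarith) hr.le
  have ht1 : t ≤ 1 := div_le_one_of_le₀ hsr hr.le
  set p := x + t • (z - x) with hp
  have htr : t * dist z x = s := div_mul_cancel₀ s hr.ne'
  have hpx : dist p x = s := by
    have h1 : p - x = t • (z - x) := by rw [hp]; abel
    rw [dist_eq_norm, h1, norm_smul, Real.norm_eq_abs, abs_of_nonneg ht0,
      ← dist_eq_norm, htr]
  have hzp : dist z p = dist z x - s := by
    have h1 : z - p = (1 - t) • (z - x) := by
      rw [hp, sub_smul, one_smul]; abel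
    rw [dist_eq_norm, h1, norm_smul, Real.norm_eq_abs,
      abs_of_nonneg (by linarith : (0:ℝ) ≤ 1 - t), ← dist_eq_norm z x,
      sub_mul, one_mul, htr]
  have hpK : infDist p (frontier K) ≤ 3 * δ := by
    calc infDist p (frontier K) ≤ infDist x (frontier K) + dist p x :=
          infDist_le_infDist_add_dist
      _ ≤ δ + s := add_le_add hxK hpx.le
      _ ≤ 3 * δ := by linarith
  have hpX : infDist p X < s := lt_of_le_of_lt (hdense p hpK) hspos
  obtain ⟨y, hyX, hpy⟩ := (infDist_lt_iff ⟨x, hxX⟩).mp hpX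
  have h2 : dist z x ≤ dist z y := hz y hyX
  have h3 : dist z y ≤ dist z p + dist p y := dist_triangle _ _ _
  linarith
end

section
/- Let K ⊂ ℝ^d be a compact convex set, let X ⊆ ℝ^d be a locally finite set, and let δ > 0. Assume that every point y ∈ ℝ^d with dist(y, ∂K) ≤ 3δ satisfies dist(y, X) ≤ δ. Then for all x, x′ ∈ X, if v_X(x) ∩ ∂K ≠ ∅ and v_X(x) ∩ v_X(x′) ≠ ∅, then dist(x′, ∂K) ≤ 3δ. -/
open Metric

theorem neighbor_of_boundary_cell_close_to_boundary
    {d : ℕ} (K X : Set (EuclideanSpace ℝ (Fin d)))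
    (hKcp : IsCompact K) (hKcv : Convex ℝ K)
    (hXlf : ∀ C : Set (EuclideanSpace ℝ (Fin d)), IsCompact C → (X ∩ C).Finite)
    (δ : ℝ) (hδ : 0 < δ)
    (hdense : ∀ y : EuclideanSpace ℝ (Fin d),
      infDist y (frontier K) ≤ 3 * δ → infDist y X ≤ δ) :
    ∀ x ∈ X, ∀ x' ∈ X,
      (voronoiCell X x ∩ frontier K).Nonempty →
      (voronoiCell X x ∩ voronoiCell X x').Nonempty →
      infDist x' (frontier K) ≤ 3 * δ := by
  rintro x hx x' hx' ⟨p, hpv, hpK⟩ ⟨z, hzx, hzx'⟩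
  have hXne : X.Nonempty := ⟨x, hx⟩
  -- dist p x ≤ δ
  have hpfr : infDist p (frontier K) ≤ 3 * δ := by
    have h0 : infDist p (frontier K) ≤ dist p p := infDist_le_dist_of_mem hpK
    simp at h0
    linarith
  have hpX : infDist p X ≤ δ := hdense p hpfr
  have hpx : dist p x ≤ δ := by
    by_contra h
    push_neg at h
    obtain ⟨y, hy, hlt⟩ := (infDist_lt_iff hXne).1 (lt_of_le_of_lt hpX h)
    exact absurd (hpv y hy) (not_le.2 hlt)
  set t := dist z p with ht
  have ht0 : 0 ≤ t := dist_nonneg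
  by_cases hcase : t ≤ 2 * δ
  · -- easy case: z is close to the boundary
    have h1 : infDist z (frontier K) ≤ 3 * δ :=
      le_trans (infDist_le_dist_of_mem hpK) (by linarith)
    have h2 : infDist z X ≤ δ := hdense z h1
    have hzxd : dist z x ≤ δ := by
      by_contra h
      push_neg at h
      obtain ⟨y, hy, hlt⟩ := (infDist_lt_iff hXne).1 (lt_of_le_of_lt h2 h)
      exact absurd (hzx y hy) (not_le.2 hlt)
    have hzx'd : dist z x' ≤ δ := le_trans (hzx' x hx) hzxd
    have : infDist x' (frontier K) ≤ dist x' p := infDist_le_dist_of_mem hpK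
    have htri : dist x' p ≤ dist x' z + dist z p := dist_triangle x' z p
    rw [dist_comm x' z] at htri
    linarith
  · -- hard case: derive a contradiction
    exfalso
    push_neg at hcase
    set s := min t (3 * δ) with hs
    have hs2 : 2 * δ < s := lt_min hcase (by linarith)
    have hst : s ≤ t := min_le_left _ _
    have hs3 : s ≤ 3 * δ := min_le_right _ _
    have ht0' : 0 < t := by linarith
    set w : EuclideanSpace ℝ (Fin d) := p + (s / t) • (z - p) with hw
    have hzp : ‖z - p‖ = t := by rw [← dist_eq_norm]
    have hwp : dist w p = s := by
      rw [hw, dist_eq_norm, add_sub_cancel_left, norm_smul,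
        Real.norm_of_nonneg (by positivity), hzp]
      field_simp
    have hwzvec : w - z = (1 - s / t) • (p - z) := by
      rw [hw]
      have h1 : (1 : ℝ) - s / t = 1 - s / t := rfl
      module
    have hwz : dist w z = t - s := by
      rw [dist_eq_norm, hwzvec, norm_smul, Real.norm_of_nonneg
        (by rw [sub_nonneg]; exact div_le_one_of_le₀ hst (le_of_lt ht0')),
        ← dist_eq_norm, dist_comm p z, ← ht]
      field_simp
    have hwK : infDist w (frontier K) ≤ 3 * δ :=
      le_trans (infDist_le_dist_of_mem hpK) (by rw [hwp]; linarith)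
    have hwX : infDist w X ≤ δ := hdense w hwK
    have h3 : dist z x - dist z w ≤ δ := by
      by_contra h
      push_neg at h
      obtain ⟨y, hy, hlt⟩ := (infDist_lt_iff hXne).1
        (show infDist w X < dist z x - dist z w from lt_of_le_of_lt hwX h)
      have h4 := hzx y hy
      have h5 := dist_triangle z w y
      linarith
    have h6 : dist z p ≤ dist z x + dist x p := dist_triangle z x p
    have hpx' : dist x p ≤ δ := by rwa [dist_comm]
    rw [dist_comm z w, hwz] at h3
    rw [← ht] at h6
    linarith
end

section
/- Let X ⊆ ℝ^d be a nonempty locally finite set, let K ⊆ ℝ^d be a set, and let R′ > 0 be such that for every z ∈ K the Voronoi cell of z with respect to X ∪ {z} is contained in the closed ball of radius R′ centered at the origin. Then for every locally finite set D ⊆ ℝ^d with D ∩ B(0, 3R′) = ∅ (where B(0,3R′) is the closed ball of radius 3R′ centered at the origin), one has v_{X∪D}(K) = v_X(K). -/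
open Metric

/-- The Voronoi approximation of `A` with respect to `X`: the union of all
Voronoi cells with nucleus in `A`. -/
def voronoiApprox {d : ℕ} (X A : Set (EuclideanSpace ℝ (Fin d))) :
    Set (EuclideanSpace ℝ (Fin d)) :=
  ⋃ x ∈ X ∩ A, voronoiCell X x

theorem voronoiApprox_union_far_points
    {d : ℕ} (X K : Set (EuclideanSpace ℝ (Fin d)))
    (hXne : X.Nonempty)
    (hXlf : ∀ C : Set (EuclideanSpace ℝ (Fin d)), IsCompact C → (X ∩ C).Finite)
    (R' : ℝ) (hR' : 0 < R')
    (hRinf : ∀ z ∈ K, voronoiCell (X ∪ {z}) z ⊆ closedBall (0 : EuclideanSpace ℝ (Fin d)) R')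
    (D : Set (EuclideanSpace ℝ (Fin d)))
    (hDlf : ∀ C : Set (EuclideanSpace ℝ (Fin d)), IsCompact C → (D ∩ C).Finite)
    (hDfar : D ∩ closedBall (0 : EuclideanSpace ℝ (Fin d)) (3 * R') = ∅) :
    voronoiApprox (X ∪ D) K = voronoiApprox X K := by
  have hKball : ∀ z ∈ K, dist z (0 : EuclideanSpace ℝ (Fin d)) ≤ R' := by
    intro z hz
    have : z ∈ voronoiCell (X ∪ {z}) z := by
      intro y _; simp [dist_self, dist_nonneg]
    simpa [mem_closedBall] using hRinf z hz this
  have hDnot : ∀ y ∈ D, (3 : ℝ) * R' < dist y (0 : EuclideanSpace ℝ (Fin d)) := by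
    intro y hy
    by_contra h
    push_neg at h
    have : y ∈ D ∩ closedBall (0 : EuclideanSpace ℝ (Fin d)) (3 * R') :=
      ⟨hy, mem_closedBall.mpr h⟩
    rw [hDfar] at this
    exact this
  have hcell : ∀ x ∈ X ∩ K, voronoiCell (X ∪ D) x = voronoiCell X x := by
    rintro x ⟨hxX, hxK⟩
    apply Set.Subset.antisymm
    · intro w hw y hy
      exact hw y (Or.inl hy)
    · intro w hw y hy
      rcases hy with hy | hy
      · exact hw y hy
      · have hwcell : w ∈ voronoiCell (X ∪ {x}) x := by
          intro y' hy'
          rcases hy' with h' | h'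
          · exact hw y' h'
          · rw [Set.mem_singleton_iff.mp h']
        have hwball : dist w (0 : EuclideanSpace ℝ (Fin d)) ≤ R' := by
          simpa [mem_closedBall] using hRinf x hxK hwcell
        have hxball : dist x (0 : EuclideanSpace ℝ (Fin d)) ≤ R' := hKball x hxK
        have h1 : dist w x ≤ 2 * R' := by
          have := dist_triangle w (0 : EuclideanSpace ℝ (Fin d)) x
          rw [dist_comm (0 : EuclideanSpace ℝ (Fin d)) x] at this
          linarith
        have h2 : 2 * R' ≤ dist w y := by
          have h3 := dist_triangle y w (0 : EuclideanSpace ℝ (Fin d))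
          have h4 := hDnot y hy
          rw [dist_comm w y]
          linarith
        linarith
  have hindex : (X ∪ D) ∩ K = X ∩ K := by
    ext x
    constructor
    · rintro ⟨hx | hx, hxK⟩
      · exact ⟨hx, hxK⟩
      · exfalso
        have := hDnot x hx
        have := hKball x hxK
        linarith
    · rintro ⟨hx, hxK⟩
      exact ⟨Or.inl hx, hxK⟩
  unfold voronoiApprox
  rw [hindex]
  exact Set.iUnion₂_congr hcell
end

section
/- Let X ⊆ ℝ^d be a nonempty locally finite set, let K ⊆ ℝ^d be a set, and let R′ > 0 be such that for every z ∈ K the Voronoi cell of z with respect to X ∪ {z} is contained in the closed ball of radius R′ centered at the origin. Then for every locally finite set D ⊆ ℝ^d one has v_{X∪D}(K) ⊆ v_{X∪(D∩K)}(K) ⊆ B(0, R′), where B(0,R′) is the closed ball of radius R′ centered at the origin; in particular the Lebesgue measures satisfy |V(v_{X∪D}(K)) − V(v_X(K))| ≤ V(B(0,R′)). -/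
open Metric MeasureTheory

theorem voronoiApprox_union_subset_ball_and_volume_bound
    {d : ℕ} (X K : Set (EuclideanSpace ℝ (Fin d)))
    (hXne : X.Nonempty)
    (hXlf : ∀ C : Set (EuclideanSpace ℝ (Fin d)), IsCompact C → (X ∩ C).Finite)
    (R' : ℝ) (hR' : 0 < R')
    (hRinf : ∀ z ∈ K, voronoiCell (X ∪ {z}) z ⊆ closedBall (0 : EuclideanSpace ℝ (Fin d)) R')
    (D : Set (EuclideanSpace ℝ (Fin d)))
    (hDlf : ∀ C : Set (EuclideanSpace ℝ (Fin d)), IsCompact C → (D ∩ C).Finite) :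
    voronoiApprox (X ∪ D) K ⊆ voronoiApprox (X ∪ (D ∩ K)) K ∧
    voronoiApprox (X ∪ (D ∩ K)) K ⊆ closedBall (0 : EuclideanSpace ℝ (Fin d)) R' ∧
    |(volume (voronoiApprox (X ∪ D) K)).toReal - (volume (voronoiApprox X K)).toReal|
      ≤ (volume (closedBall (0 : EuclideanSpace ℝ (Fin d)) R')).toReal := by
  -- key: any Voronoi approx over a superset of X with nuclei in K lands in the ball
  have key : ∀ Y : Set (EuclideanSpace ℝ (Fin d)), X ⊆ Y →
      voronoiApprox Y K ⊆ closedBall (0 : EuclideanSpace ℝ (Fin d)) R' := by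
    intro Y hXY z hz
    rcases Set.mem_iUnion₂.1 hz with ⟨x, hx, hzx⟩
    apply hRinf x hx.2
    intro y hy
    rcases hy with hy | hy
    · exact hzx y (hXY hy)
    · rw [Set.mem_singleton_iff] at hy; subst hy; exact le_refl _
  have h1 : voronoiApprox (X ∪ D) K ⊆ voronoiApprox (X ∪ (D ∩ K)) K := by
    intro z hz
    rcases Set.mem_iUnion₂.1 hz with ⟨x, hx, hzx⟩
    apply Set.mem_iUnion₂.2
    refine ⟨x, ⟨?_, hx.2⟩, ?_⟩
    · rcases hx.1 with h | h
      · exact Or.inl h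
      · exact Or.inr ⟨h, hx.2⟩
    · intro y hy
      apply hzx
      rcases hy with h | h
      · exact Or.inl h
      · exact Or.inr h.1
  have h2 := key (X ∪ (D ∩ K)) Set.subset_union_left
  refine ⟨h1, h2, ?_⟩
  have hD : voronoiApprox (X ∪ D) K ⊆ closedBall (0 : EuclideanSpace ℝ (Fin d)) R' :=
    (h1.trans h2)
  have hX : voronoiApprox X K ⊆ closedBall (0 : EuclideanSpace ℝ (Fin d)) R' :=
    key X (le_refl _)
  have hball : volume (closedBall (0 : EuclideanSpace ℝ (Fin d)) R') ≠ ⊤ :=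
    (measure_closedBall_lt_top).ne
  have hDv : (volume (voronoiApprox (X ∪ D) K)).toReal
      ≤ (volume (closedBall (0 : EuclideanSpace ℝ (Fin d)) R')).toReal :=
    ENNReal.toReal_mono hball (measure_mono hD)
  have hXv : (volume (voronoiApprox X K)).toReal
      ≤ (volume (closedBall (0 : EuclideanSpace ℝ (Fin d)) R')).toReal :=
    ENNReal.toReal_mono hball (measure_mono hX)
  rw [abs_sub_le_iff]
  constructor
  · linarith [ENNReal.toReal_nonneg (a := volume (voronoiApprox X K))]
  · linarith [ENNReal.toReal_nonneg (a := volume (voronoiApprox (X ∪ D) K))]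
end

section
/- Let X ⊆ ℝ^d be a locally finite set, let x ∈ X be such that X ∖ {x} is nonempty, and let K ⊆ ℝ^d be any set. Then the symmetric difference satisfies v_X(K) △ v_{X∖{x}}(K) ⊆ v_X(x). In particular, for the Lebesgue measure V, |V(v_{X∖{x}}(K)) − V(v_X(K))| ≤ V(v_X(x)) and |V(v_{X∖{x}}(K) △ K) − V(v_X(K) △ K)| ≤ V(v_X(x)) whenever these measures are finite. -/
open Metric MeasureTheory

/-- If `A △ B ⊆ C` and all measures are finite, the difference of measures
of `A` and `B` is bounded by the measure of `C`. -/
lemma abs_toReal_measure_sub_le {α : Type*} [MeasurableSpace α]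
    {μ : Measure α} {A B C : Set α} (h : symmDiff A B ⊆ C)
    (hA : μ A ≠ ⊤) (hB : μ B ≠ ⊤) (hC : μ C ≠ ⊤) :
    |(μ B).toReal - (μ A).toReal| ≤ (μ C).toReal := by
  have hBA : B \ A ⊆ C := fun z hz => h (Or.inr hz)
  have hAB : A \ B ⊆ C := fun z hz => h (Or.inl hz)
  have h1 : μ B ≤ μ A + μ C := by
    calc μ B ≤ μ (A ∪ (B \ A)) := measure_mono (fun z hz => by
          by_cases hzA : z ∈ A
          · exact Or.inl hzA
          · exact Or.inr ⟨hz, hzA⟩)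
      _ ≤ μ A + μ (B \ A) := measure_union_le _ _
      _ ≤ μ A + μ C := add_le_add le_rfl (measure_mono hBA)
  have h2 : μ A ≤ μ B + μ C := by
    calc μ A ≤ μ (B ∪ (A \ B)) := measure_mono (fun z hz => by
          by_cases hzB : z ∈ B
          · exact Or.inl hzB
          · exact Or.inr ⟨hz, hzB⟩)
      _ ≤ μ B + μ (A \ B) := measure_union_le _ _
      _ ≤ μ B + μ C := add_le_add le_rfl (measure_mono hAB)
  rw [abs_sub_le_iff]
  constructor
  · have := ENNReal.toReal_mono (by simp [ENNReal.add_ne_top, hA, hC]) h1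
    rw [ENNReal.toReal_add hA hC] at this
    linarith
  · have := ENNReal.toReal_mono (by simp [ENNReal.add_ne_top, hB, hC]) h2
    rw [ENNReal.toReal_add hB hC] at this
    linarith

theorem voronoiApprox_symmDiff_remove_point_subset_cell
    {d : ℕ} (X K : Set (EuclideanSpace ℝ (Fin d)))
    (hXlf : ∀ C : Set (EuclideanSpace ℝ (Fin d)), IsCompact C → (X ∩ C).Finite)
    (x : EuclideanSpace ℝ (Fin d)) (hx : x ∈ X)
    (hXx : (X \ {x}).Nonempty) :
    symmDiff (voronoiApprox X K) (voronoiApprox (X \ {x}) K) ⊆ voronoiCell X x ∧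
    (volume (voronoiApprox X K) ≠ ⊤ → volume (voronoiApprox (X \ {x}) K) ≠ ⊤ →
      volume (voronoiCell X x) ≠ ⊤ →
      |(volume (voronoiApprox (X \ {x}) K)).toReal - (volume (voronoiApprox X K)).toReal|
        ≤ (volume (voronoiCell X x)).toReal) ∧
    (volume (symmDiff (voronoiApprox X K) K) ≠ ⊤ →
      volume (symmDiff (voronoiApprox (X \ {x}) K) K) ≠ ⊤ →
      volume (voronoiCell X x) ≠ ⊤ →
      |(volume (symmDiff (voronoiApprox (X \ {x}) K) K)).toReal
          - (volume (symmDiff (voronoiApprox X K) K)).toReal|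
        ≤ (volume (voronoiCell X x)).toReal) := by
  set A := voronoiApprox X K with hA
  set B := voronoiApprox (X \ {x}) K with hB
  have hsub : symmDiff A B ⊆ voronoiCell X x := by
    rintro z (⟨hzA, hzB⟩ | ⟨hzB, hzA⟩)
    · -- z ∈ A \ B : its nucleus must be x
      obtain ⟨y, hy, hzy⟩ : ∃ y ∈ X ∩ K, z ∈ voronoiCell X y := by
        simpa [hA, voronoiApprox] using hzA
      by_cases hyx : y = x
      · exact hyx ▸ hzy
      · exfalso
        apply hzB
        simp only [hB, voronoiApprox, Set.mem_iUnion]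
        refine ⟨y, ⟨⟨hy.1, hyx⟩, hy.2⟩, fun w hw => hzy w hw.1⟩
    · -- z ∈ B \ A
      obtain ⟨y, hy, hzy⟩ : ∃ y ∈ (X \ {x}) ∩ K, z ∈ voronoiCell (X \ {x}) y := by
        simpa [hB, voronoiApprox] using hzB
      have hne : ¬ z ∈ voronoiCell X y := by
        intro hc
        apply hzA
        simp only [hA, voronoiApprox, Set.mem_iUnion]
        exact ⟨y, ⟨hy.1.1, hy.2⟩, hc⟩
      obtain ⟨w, hwX, hw⟩ : ∃ w ∈ X, ¬ dist z y ≤ dist z w := by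
        by_contra hcon
        push_neg at hcon
        exact hne fun w hw => hcon w hw
      have hwx : w = x := by
        by_contra hwx
        exact hw (hzy w ⟨hwX, hwx⟩)
      push_neg at hw
      intro u hu
      by_cases hux : u = x
      · subst hux; exact le_rfl
      · subst hwx
        exact le_trans (le_of_lt hw) (hzy u ⟨hu, hux⟩)
  refine ⟨hsub, fun h1 h2 h3 => abs_toReal_measure_sub_le hsub h1 h2 h3, fun h1 h2 h3 => ?_⟩
  have heq : symmDiff (symmDiff A K) (symmDiff B K) = symmDiff A B := by
    rw [symmDiff_symmDiff_symmDiff_comm, symmDiff_self]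
    simp
  exact abs_toReal_measure_sub_le (heq ▸ hsub) h1 h2 h3
end

section
/- Let X ⊆ ℝ^d be a locally finite set, let x ∈ X be such that X ∖ {x} is nonempty, and let K ⊆ ℝ^d be any set. Assume that for every y ∈ X with v_X(x) ∩ v_X(y) ≠ ∅ one has y ∈ K if and only if x ∈ K. Then v_{X∖{x}}(K) = v_X(K). -/
open Metric

private lemma seg_dist {E : Type*} [NormedAddCommGroup E] [NormedSpace ℝ E]
    (z y w : E) {t : ℝ} (ht0 : 0 ≤ t) (ht1 : t ≤ 1)
    (h : dist z y ≤ dist z w) :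
    dist ((1 - t) • z + t • y) y ≤ dist ((1 - t) • z + t • y) w := by
  set p := (1 - t) • z + t • y with hp
  have hpy : dist p y = (1 - t) * dist z y := by
    have h1 : p - y = (1 - t) • (z - y) := by
      rw [hp]; module
    rw [dist_eq_norm, h1, norm_smul, Real.norm_eq_abs, abs_of_nonneg (by linarith),
      ← dist_eq_norm]
  have hzp : dist z p = t * dist z y := by
    have h1 : z - p = t • (z - y) := by
      rw [hp]; module
    rw [dist_eq_norm, h1, norm_smul, Real.norm_eq_abs, abs_of_nonneg ht0, ← dist_eq_norm]
  have htri : dist z w ≤ dist z p + dist p w := dist_triangle z p w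
  linarith

private lemma neighbor_nonempty {d : ℕ} (X : Set (EuclideanSpace ℝ (Fin d)))
    (x y z : EuclideanSpace ℝ (Fin d))
    (hzx : z ∈ voronoiCell X x)
    (hzy : ∀ w ∈ X, w ≠ x → dist z y ≤ dist z w)
    (hyX : y ∈ X) :
    (voronoiCell X x ∩ voronoiCell X y).Nonempty := by
  set g : ℝ → ℝ := fun t => dist ((1 - t) • z + t • y) x - dist ((1 - t) • z + t • y) y
    with hg
  have hgc : ContinuousOn g (Set.Icc 0 1) := by
    apply Continuous.continuousOn
    fun_prop
  have hg0 : g 0 ≤ 0 := by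
    simp only [hg]
    simp only [sub_zero, one_smul, zero_smul, add_zero]
    have := hzx y hyX
    linarith
  have hg1 : 0 ≤ g 1 := by
    simp only [hg]
    norm_num
  have h0 : (0 : ℝ) ∈ Set.Icc (g 0) (g 1) := ⟨hg0, hg1⟩
  obtain ⟨t, ht, hgt⟩ := intermediate_value_Icc (by norm_num : (0:ℝ) ≤ 1) hgc h0
  set p := (1 - t) • z + t • y with hp
  have heq : dist p x = dist p y := by
    have : dist p x - dist p y = 0 := hgt
    linarith
  have hpy : p ∈ voronoiCell X y := by
    intro w hw
    by_cases hwx : w = x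
    · rw [hwx, ← heq]
    · exact seg_dist z y w ht.1 ht.2 (hzy w hw hwx)
  have hpx : p ∈ voronoiCell X x := by
    intro w hw
    rw [heq]
    exact hpy w hw
  exact ⟨p, hpx, hpy⟩

private lemma exists_nearest {d : ℕ} (X' : Set (EuclideanSpace ℝ (Fin d)))
    (hlf : ∀ C : Set (EuclideanSpace ℝ (Fin d)), IsCompact C → (X' ∩ C).Finite)
    (hne : X'.Nonempty) (z : EuclideanSpace ℝ (Fin d)) :
    ∃ y ∈ X', ∀ w ∈ X', dist z y ≤ dist z w := by
  obtain ⟨y0, hy0⟩ := hne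
  have hfin := hlf (closedBall z (dist z y0)) (isCompact_closedBall z _)
  have hne' : (X' ∩ closedBall z (dist z y0)).Nonempty :=
    ⟨y0, hy0, by simp [mem_closedBall, dist_comm]⟩
  obtain ⟨y, ⟨hyX, hyb⟩, hmin⟩ := Set.exists_min_image _ (fun w => dist z w) hfin hne'
  refine ⟨y, hyX, fun w hw => ?_⟩
  by_cases hwb : dist z w ≤ dist z y0
  · exact hmin w ⟨hw, by simpa [mem_closedBall, dist_comm] using hwb⟩
  · have := hmin y0 ⟨hy0, by simp [mem_closedBall, dist_comm]⟩
    linarith [not_le.mp hwb]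

theorem voronoiApprox_remove_point_of_neighbors_same_side
    {d : ℕ} (X K : Set (EuclideanSpace ℝ (Fin d)))
    (hXlf : ∀ C : Set (EuclideanSpace ℝ (Fin d)), IsCompact C → (X ∩ C).Finite)
    (x : EuclideanSpace ℝ (Fin d)) (hx : x ∈ X)
    (hXx : (X \ {x}).Nonempty)
    (hnb : ∀ y ∈ X, (voronoiCell X x ∩ voronoiCell X y).Nonempty → (y ∈ K ↔ x ∈ K)) :
    voronoiApprox (X \ {x}) K = voronoiApprox X K := by
  ext z
  simp only [voronoiApprox, Set.mem_iUnion, Set.mem_inter_iff, Set.mem_diff,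
    Set.mem_singleton_iff, exists_prop]
  constructor
  · rintro ⟨y, ⟨⟨hyX, hyx⟩, hyK⟩, hzy⟩
    by_cases hall : ∀ w ∈ X, dist z y ≤ dist z w
    · exact ⟨y, ⟨hyX, hyK⟩, hall⟩
    · push_neg at hall
      obtain ⟨w, hwX, hwlt⟩ := hall
      have hwx : w = x := by
        by_contra hne
        exact absurd (hzy w ⟨hwX, hne⟩) (not_le.mpr hwlt)
      subst hwx
      have hzx : z ∈ voronoiCell X w := by
        intro v hv
        by_cases hvx : v = w
        · exact hvx ▸ le_refl _
        · exact le_trans hwlt.le (hzy v ⟨hv, hvx⟩)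
      have hxK : w ∈ K := by
        have := hnb y hyX (neighbor_nonempty X w y z hzx (fun v hv hvx => hzy v ⟨hv, hvx⟩) hyX)
        exact this.mp hyK
      exact ⟨w, ⟨hwX, hxK⟩, hzx⟩
  · rintro ⟨y, ⟨hyX, hyK⟩, hzy⟩
    by_cases hyx : y = x
    · subst hyx
      have hlf' : ∀ C : Set (EuclideanSpace ℝ (Fin d)), IsCompact C → ((X \ {y}) ∩ C).Finite :=
        fun C hC => (hXlf C hC).subset (by intro a ha; exact ⟨ha.1.1, ha.2⟩)
      obtain ⟨y', hy'X, hy'min⟩ := exists_nearest (X \ {y}) hlf' hXx z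
      have hnbne := neighbor_nonempty X y y' z hzy
        (fun w hw hwx => hy'min w ⟨hw, hwx⟩) hy'X.1
      have hy'K : y' ∈ K := (hnb y' hy'X.1 hnbne).mpr hyK
      exact ⟨y', ⟨⟨hy'X.1, hy'X.2⟩, hy'K⟩, fun w hw => hy'min w hw⟩
    · exact ⟨y, ⟨⟨hyX, hyx⟩, hyK⟩, fun w hw => hzy w hw.1⟩
end

section
/- Let X ⊆ ℝ^d be a locally finite set, let x ∈ X, and let y ∈ X ∖ {x}. If v_{X∖{x}}(y) ∩ v_X(x) ≠ ∅, then v_X(y) ∩ v_X(x) ≠ ∅. -/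
open Metric

theorem voronoiCell_remove_meets_imp_meets
    {d : ℕ} (X : Set (EuclideanSpace ℝ (Fin d)))
    (hXlf : ∀ C : Set (EuclideanSpace ℝ (Fin d)), IsCompact C → (X ∩ C).Finite)
    (x : EuclideanSpace ℝ (Fin d)) (hx : x ∈ X)
    (y : EuclideanSpace ℝ (Fin d)) (hy : y ∈ X \ {x})
    (h : (voronoiCell (X \ {x}) y ∩ voronoiCell X x).Nonempty) :
    (voronoiCell X y ∩ voronoiCell X x).Nonempty := by
  obtain ⟨z, hzy, hzx⟩ := h
  obtain ⟨hyX, hyx⟩ := hy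
  have hyx' : y ≠ x := hyx
  set φ : ℝ → ℝ := fun t => dist ((1-t) • z + t • y) x - dist ((1-t) • z + t • y) y with hφ
  have hcont : ContinuousOn φ (Set.Icc 0 1) := by
    apply Continuous.continuousOn
    fun_prop
  have h0 : φ 0 ≤ 0 := by
    simp only [hφ, sub_zero, one_smul, zero_smul, add_zero]
    have := hzx y hyX
    linarith
  have h1 : 0 ≤ φ 1 := by
    simp only [hφ, sub_self, zero_smul, one_smul, zero_add, dist_self, sub_zero]
    exact dist_nonneg
  have hmem : (0:ℝ) ∈ Set.Icc (φ 0) (φ 1) := ⟨h0, h1⟩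
  obtain ⟨t, ht, hφt⟩ := intermediate_value_Icc zero_le_one hcont hmem
  set u : EuclideanSpace ℝ (Fin d) := (1-t) • z + t • y with hu
  have heq : dist u x = dist u y := by
    have : dist u x - dist u y = 0 := hφt
    linarith
  have hzu : dist z u = t * dist z y := by
    have : z - u = t • (z - y) := by
      rw [hu]
      module
    rw [dist_eq_norm, this, norm_smul, Real.norm_eq_abs, abs_of_nonneg ht.1, dist_eq_norm]
  have huy : dist u y = (1-t) * dist z y := by
    have : u - y = (1-t) • (z - y) := by
      rw [hu]
      module
    rw [dist_eq_norm, this, norm_smul, Real.norm_eq_abs, abs_of_nonneg (by linarith [ht.2]),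
      dist_eq_norm]
  have key : ∀ w ∈ X, dist u y ≤ dist u w := by
    intro w hw
    by_cases hwx : w = x
    · rw [hwx, ← heq]
    · have h2 : dist z y ≤ dist z w := hzy w ⟨hw, hwx⟩
      have h3 : dist z w ≤ dist z u + dist u w := dist_triangle z u w
      rw [huy]
      rw [hzu] at h3
      linarith
  exact ⟨u, key, fun w hw => heq ▸ key w hw⟩
end

section
/- Let d ≥ 1 be an integer and let a > 0 and l > 0 be real numbers. Then ∫_{ℝ∖[0,l]} ∫_0^l e^{−a|x−y|^d} |x−y|^{d−1} dy dx = (2/d) a^{−1} ∫_0^l e^{−a y^d} dy = (2/d²) a^{−1−1/d} ∫_0^{a l^d} e^{−s} s^{1/d − 1} ds. -/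
open MeasureTheory Real

private lemma ecie_integrable (d : ℕ) (hd : 1 ≤ d) {a : ℝ} (ha : 0 < a) :
    IntegrableOn (fun x : ℝ => Real.exp (-(a * x ^ d))) (Set.Ioi 0) := by
  have h := integrableOn_rpow_mul_exp_neg_mul_rpow (p := (d : ℝ)) (s := 0) (b := a)
    (by norm_num) (by exact_mod_cast hd) ha
  refine h.congr_fun (fun x hx => ?_) measurableSet_Ioi
  dsimp only
  rw [Real.rpow_zero, one_mul, Real.rpow_natCast, neg_mul]

private lemma ecie_inner_right (d : ℕ) (hd : 1 ≤ d) (a l : ℝ) (ha : 0 < a) (hl : 0 < l)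
    (x : ℝ) (hx : l < x) :
    (∫ y in Set.Ioc (0:ℝ) l, Real.exp (-(a * |x - y| ^ d)) * |x - y| ^ (d - 1))
      = (a * d)⁻¹ * (Real.exp (-(a * (x - l) ^ d)) - Real.exp (-(a * x ^ d))) := by
  have hd0 : (0:ℝ) < (d:ℝ) := by exact_mod_cast Nat.lt_of_lt_of_le Nat.zero_lt_one hd
  have hcongr : Set.EqOn (fun y => Real.exp (-(a * |x - y| ^ d)) * |x - y| ^ (d - 1))
      (fun y => Real.exp (-(a * (x - y) ^ d)) * (x - y) ^ (d - 1)) (Set.Ioc (0:ℝ) l) := by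
    intro y hy
    simp only
    rw [abs_of_pos (by linarith [hy.2] : (0:ℝ) < x - y)]
  rw [setIntegral_congr_fun measurableSet_Ioc hcongr,
    ← intervalIntegral.integral_of_le hl.le]
  have key : ∀ y : ℝ, HasDerivAt (fun y => (a * (d:ℝ))⁻¹ * Real.exp (-(a * (x - y) ^ d)))
      (Real.exp (-(a * (x - y) ^ d)) * (x - y) ^ (d - 1)) y := by
    intro y
    have h1 : HasDerivAt (fun y : ℝ => x - y) (-1) y := (hasDerivAt_id y).const_sub x
    have h5 := ((((h1.pow d).const_mul a).neg).exp).const_mul ((a * (d:ℝ))⁻¹)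
    convert h5 using 1
    · rfl
    · rfl
    · rfl
    simp only [Pi.neg_apply, Pi.pow_apply]
    field_simp
  have hInt : IntervalIntegrable
      (fun y => Real.exp (-(a * (x - y) ^ d)) * (x - y) ^ (d - 1)) volume 0 l :=
    (Continuous.intervalIntegrable (by fun_prop) 0 l)
  rw [intervalIntegral.integral_eq_sub_of_hasDerivAt (fun t _ => key t) hInt]
  rw [sub_zero]
  ring

private lemma ecie_inner_left (d : ℕ) (hd : 1 ≤ d) (a l : ℝ) (ha : 0 < a) (hl : 0 < l)
    (x : ℝ) (hx : x < 0) :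
    (∫ y in Set.Ioc (0:ℝ) l, Real.exp (-(a * |x - y| ^ d)) * |x - y| ^ (d - 1))
      = (a * d)⁻¹ * (Real.exp (-(a * (-x) ^ d)) - Real.exp (-(a * (l - x) ^ d))) := by
  have hd0 : (0:ℝ) < (d:ℝ) := by exact_mod_cast Nat.lt_of_lt_of_le Nat.zero_lt_one hd
  have hcongr : Set.EqOn (fun y => Real.exp (-(a * |x - y| ^ d)) * |x - y| ^ (d - 1))
      (fun y => Real.exp (-(a * (y - x) ^ d)) * (y - x) ^ (d - 1)) (Set.Ioc (0:ℝ) l) := by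
    intro y hy
    simp only
    rw [abs_of_neg (by linarith [hy.1] : x - y < 0), neg_sub]
  rw [setIntegral_congr_fun measurableSet_Ioc hcongr,
    ← intervalIntegral.integral_of_le hl.le]
  have key : ∀ y : ℝ, HasDerivAt (fun y => -((a * (d:ℝ))⁻¹ * Real.exp (-(a * (y - x) ^ d))))
      (Real.exp (-(a * (y - x) ^ d)) * (y - x) ^ (d - 1)) y := by
    intro y
    have h1 : HasDerivAt (fun y : ℝ => y - x) (1) y := (hasDerivAt_id y).sub_const x
    have h5 := (((((h1.pow d).const_mul a).neg).exp).const_mul ((a * (d:ℝ))⁻¹)).neg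
    convert h5 using 1
    · rfl
    · rfl
    · rfl
    simp only [Pi.neg_apply, Pi.pow_apply]
    field_simp
  have hInt : IntervalIntegrable
      (fun y => Real.exp (-(a * (y - x) ^ d)) * (y - x) ^ (d - 1)) volume 0 l :=
    (Continuous.intervalIntegrable (by fun_prop) 0 l)
  rw [intervalIntegral.integral_eq_sub_of_hasDerivAt (fun t _ => key t) hInt]
  rw [zero_sub]
  ring

private lemma ecie_trans (l : ℝ) (g : ℝ → ℝ) :
    (∫ x in Set.Ioi l, g x) = ∫ x in Set.Ioi (0:ℝ), g (x + l) := by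
  have himg : (fun x : ℝ => x + l) '' Set.Ioi (0:ℝ) = Set.Ioi l := by
    rw [Set.image_add_const_Ioi, zero_add]
  have hf' : ∀ x ∈ Set.Ioi (0:ℝ), HasDerivWithinAt (fun x : ℝ => x + l) 1 (Set.Ioi 0) x :=
    fun x _ => ((hasDerivAt_id x).add_const l).hasDerivWithinAt
  rw [← himg, integral_image_eq_integral_abs_deriv_smul measurableSet_Ioi hf'
    (fun x _ y _ h => by simpa using h)]
  simp

private lemma ecie_trans_int (l : ℝ) (g : ℝ → ℝ) :
    IntegrableOn g (Set.Ioi l) ↔ IntegrableOn (fun x => g (x + l)) (Set.Ioi (0:ℝ)) := by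
  have himg : (fun x : ℝ => x + l) '' Set.Ioi (0:ℝ) = Set.Ioi l := by
    rw [Set.image_add_const_Ioi, zero_add]
  have hf' : ∀ x ∈ Set.Ioi (0:ℝ), HasDerivWithinAt (fun x : ℝ => x + l) 1 (Set.Ioi 0) x :=
    fun x _ => ((hasDerivAt_id x).add_const l).hasDerivWithinAt
  rw [← himg, integrableOn_image_iff_integrableOn_abs_deriv_smul measurableSet_Ioi hf'
    (fun x _ y _ h => by simpa using h)]
  simp only [abs_one, one_smul]

private lemma ecie_neg (g : ℝ → ℝ) :
    (∫ x in Set.Iio (0:ℝ), g x) = ∫ x in Set.Ioi (0:ℝ), g (-x) := by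
  rw [← integral_Iic_eq_integral_Iio]
  have := integral_comp_neg_Ioi (0:ℝ) g
  simpa using this.symm

private lemma ecie_neg_int (g : ℝ → ℝ)
    (hg : IntegrableOn (fun x => g (-x)) (Set.Ioi (0:ℝ))) :
    IntegrableOn g (Set.Iio (0:ℝ)) := by
  have himg : (fun x : ℝ => -x) '' Set.Ioi (0:ℝ) = Set.Iio 0 := by
    ext t
    constructor
    · rintro ⟨y, hy, rfl⟩; simpa using hy
    · intro ht; exact ⟨-t, by simpa using ht, by simp⟩
  have hf' : ∀ x ∈ Set.Ioi (0:ℝ), HasDerivWithinAt (fun x : ℝ => -x) (-1) (Set.Ioi 0) x :=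
    fun x _ => (hasDerivAt_neg x).hasDerivWithinAt
  rw [← himg]
  rw [integrableOn_image_iff_integrableOn_abs_deriv_smul measurableSet_Ioi hf'
    (fun x _ y _ h => by simpa using h)]
  simpa using hg

theorem exp_chord_integral_eval
    (d : ℕ) (hd : 1 ≤ d) (a l : ℝ) (ha : 0 < a) (hl : 0 < l) :
    (∫ x in (Set.Icc (0:ℝ) l)ᶜ, ∫ y in Set.Ioc (0:ℝ) l,
        Real.exp (-(a * |x - y| ^ d)) * |x - y| ^ (d - 1))
      = 2 / (d : ℝ) * a⁻¹ * ∫ y in Set.Ioc (0:ℝ) l, Real.exp (-(a * y ^ d)) ∧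
    (∫ x in (Set.Icc (0:ℝ) l)ᶜ, ∫ y in Set.Ioc (0:ℝ) l,
        Real.exp (-(a * |x - y| ^ d)) * |x - y| ^ (d - 1))
      = 2 / (d : ℝ) ^ 2 * a ^ (-1 - 1 / (d : ℝ))
          * ∫ s in Set.Ioc (0:ℝ) (a * l ^ d), Real.exp (-s) * s ^ (1 / (d : ℝ) - 1) := by
  have hd0 : (0:ℝ) < (d:ℝ) := by exact_mod_cast Nat.lt_of_lt_of_le Nat.zero_lt_one hd
  have hdne : d ≠ 0 := Nat.one_le_iff_ne_zero.mp hd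
  set f0 : ℝ → ℝ := fun x => Real.exp (-(a * x ^ d)) with hf0def
  have hf0 : IntegrableOn f0 (Set.Ioi 0) := ecie_integrable d hd ha
  have hf0l : IntegrableOn f0 (Set.Ioi l) := hf0.mono_set (Set.Ioi_subset_Ioi hl.le)
  have hf0B : IntegrableOn f0 (Set.Ioc 0 l) := hf0.mono_set Set.Ioc_subset_Ioi_self
  set A : ℝ := ∫ x in Set.Ioi (0:ℝ), f0 x with hAdef
  set B : ℝ := ∫ y in Set.Ioc (0:ℝ) l, f0 y with hBdef
  -- translation: the shifted exponential on Ioi l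
  have hshift_eq : (fun x : ℝ => Real.exp (-(a * (x - l) ^ d))) ∘ (· + l) = f0 := by
    funext x; simp [hf0def]
  have hshiftInt : IntegrableOn (fun x : ℝ => Real.exp (-(a * (x - l) ^ d))) (Set.Ioi l) := by
    rw [ecie_trans_int]
    exact hf0.congr_fun (fun x _ => by simp [hf0def]) measurableSet_Ioi
  have hshiftVal : (∫ x in Set.Ioi l, Real.exp (-(a * (x - l) ^ d))) = A := by
    rw [ecie_trans l]
    simp only [add_sub_cancel_right]
    rfl
  -- split A
  have hsplit : A = B + ∫ x in Set.Ioi l, f0 x := by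
    rw [hAdef, ← Set.Ioc_union_Ioi_eq_Ioi hl.le,
      setIntegral_union Set.Ioc_disjoint_Ioi_same measurableSet_Ioi hf0B hf0l]
  have hIoil_f0 : (∫ x in Set.Ioi l, f0 x) = A - B := by rw [hsplit]; ring
  -- value on Ioi l
  have hIoiVal : (∫ x in Set.Ioi l,
      ∫ y in Set.Ioc (0:ℝ) l, Real.exp (-(a * |x - y| ^ d)) * |x - y| ^ (d - 1))
        = (a * d)⁻¹ * B := by
    rw [setIntegral_congr_fun measurableSet_Ioi
      (fun x hx => ecie_inner_right d hd a l ha hl x hx)]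
    rw [integral_const_mul, integral_sub hshiftInt hf0l, hshiftVal, hIoil_f0]
    ring
  -- value on Iio 0
  have hplusInt : IntegrableOn (fun x : ℝ => Real.exp (-(a * (l + x) ^ d))) (Set.Ioi 0) := by
    have := (ecie_trans_int l f0).mp hf0l
    refine this.congr_fun (fun x _ => ?_) measurableSet_Ioi
    simp [hf0def, add_comm]
  have hplusVal : (∫ x in Set.Ioi (0:ℝ), Real.exp (-(a * (l + x) ^ d))) = A - B := by
    rw [← hIoil_f0, ecie_trans l f0]
    congr 1
    funext x
    simp [hf0def, add_comm]
  have hIioVal : (∫ x in Set.Iio (0:ℝ),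
      ∫ y in Set.Ioc (0:ℝ) l, Real.exp (-(a * |x - y| ^ d)) * |x - y| ^ (d - 1))
        = (a * d)⁻¹ * B := by
    rw [setIntegral_congr_fun measurableSet_Iio
      (fun x hx => ecie_inner_left d hd a l ha hl x hx)]
    rw [ecie_neg (fun x => (a * (d:ℝ))⁻¹ *
      (Real.exp (-(a * (-x) ^ d)) - Real.exp (-(a * (l - x) ^ d))))]
    have : (fun x : ℝ => (a * (d:ℝ))⁻¹ *
        (Real.exp (-(a * (-(-x)) ^ d)) - Real.exp (-(a * (l - -x) ^ d))))
        = fun x : ℝ => (a * (d:ℝ))⁻¹ * (f0 x - Real.exp (-(a * (l + x) ^ d))) := by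
      funext x; simp [hf0def, sub_neg_eq_add]
    rw [this, integral_const_mul, integral_sub hf0 hplusInt, hplusVal, ← hAdef]
    ring
  -- integrability of the inner-integral function on the two pieces
  have hGIoi : IntegrableOn (fun x => ∫ y in Set.Ioc (0:ℝ) l,
      Real.exp (-(a * |x - y| ^ d)) * |x - y| ^ (d - 1)) (Set.Ioi l) := by
    have hh : IntegrableOn (fun x : ℝ => (a * (d:ℝ))⁻¹ *
        (Real.exp (-(a * (x - l) ^ d)) - Real.exp (-(a * x ^ d)))) (Set.Ioi l) :=
      (hshiftInt.sub hf0l).const_mul ((a * (d:ℝ))⁻¹)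
    exact hh.congr_fun
      (fun x hx => (ecie_inner_right d hd a l ha hl x hx).symm) measurableSet_Ioi
  have hGIio : IntegrableOn (fun x => ∫ y in Set.Ioc (0:ℝ) l,
      Real.exp (-(a * |x - y| ^ d)) * |x - y| ^ (d - 1)) (Set.Iio 0) := by
    refine IntegrableOn.congr_fun ?_
      (fun x hx => (ecie_inner_left d hd a l ha hl x hx).symm) measurableSet_Iio
    apply ecie_neg_int
    have hh : IntegrableOn (fun x : ℝ => (a * (d:ℝ))⁻¹ *
        (f0 x - Real.exp (-(a * (l + x) ^ d)))) (Set.Ioi 0) :=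
      (hf0.sub hplusInt).const_mul ((a * (d:ℝ))⁻¹)
    refine hh.congr_fun (fun x _ => ?_) measurableSet_Ioi
    simp [hf0def, sub_neg_eq_add]
  -- first equality
  have hmain : (∫ x in (Set.Icc (0:ℝ) l)ᶜ, ∫ y in Set.Ioc (0:ℝ) l,
      Real.exp (-(a * |x - y| ^ d)) * |x - y| ^ (d - 1))
        = 2 / (d : ℝ) * a⁻¹ * B := by
    have hset : (Set.Icc (0:ℝ) l)ᶜ = Set.Iio 0 ∪ Set.Ioi l := by
      ext x
      simp only [Set.mem_compl_iff, Set.mem_Icc, not_and_or, not_le, Set.mem_union,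
        Set.mem_Iio, Set.mem_Ioi]
    rw [hset,
      setIntegral_union (Set.disjoint_left.mpr (fun x hx hx' => by
        simp only [Set.mem_Iio, Set.mem_Ioi] at hx hx'; linarith)) measurableSet_Ioi hGIio hGIoi,
      hIioVal, hIoiVal]
    field_simp
    ring
  constructor
  · exact hmain
  -- second equality: substitution s = a * y ^ d
  have hsub : (∫ s in Set.Ioc (0:ℝ) (a * l ^ d), Real.exp (-s) * s ^ (1 / (d : ℝ) - 1))
      = (d : ℝ) * a ^ ((1:ℝ) / d) * B := by
    rw [integral_Ioc_eq_integral_Ioo]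
    have himg : (fun y : ℝ => a * y ^ d) '' Set.Ioo 0 l = Set.Ioo 0 (a * l ^ d) := by
      ext t
      constructor
      · rintro ⟨y, hy, rfl⟩
        refine ⟨by have := hy.1; positivity, ?_⟩
        exact mul_lt_mul_of_pos_left (pow_lt_pow_left₀ hy.2 hy.1.le hdne) ha
      · intro ht
        have hta : 0 < t / a := div_pos ht.1 ha
        refine ⟨(t / a) ^ ((1:ℝ) / d), ⟨Real.rpow_pos_of_pos hta _, ?_⟩, ?_⟩
        · have h1 : t / a < l ^ (d:ℝ) := by
            rw [Real.rpow_natCast]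
            rw [div_lt_iff₀ ha]
            linarith [ht.2]
          have h2 := Real.rpow_lt_rpow hta.le h1 (by positivity : (0:ℝ) < 1 / d)
          rwa [← Real.rpow_mul hl.le, mul_one_div, div_self (ne_of_gt hd0),
            Real.rpow_one] at h2
        · have : ((t / a) ^ ((1:ℝ) / d)) ^ d = t / a := by
            rw [← Real.rpow_natCast ((t / a) ^ ((1:ℝ) / d)) d, ← Real.rpow_mul hta.le,
              one_div, inv_mul_cancel₀ (ne_of_gt hd0), Real.rpow_one]
          show a * ((t / a) ^ ((1:ℝ) / d)) ^ d = t
          rw [this]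
          field_simp
    have hderiv : ∀ y ∈ Set.Ioo (0:ℝ) l, HasDerivWithinAt (fun y : ℝ => a * y ^ d)
        (a * ((d:ℕ) * y ^ (d - 1))) (Set.Ioo 0 l) y :=
      fun y _ => ((hasDerivAt_pow d y).const_mul a).hasDerivWithinAt
    have hinj : Set.InjOn (fun y : ℝ => a * y ^ d) (Set.Ioo 0 l) := by
      intro y1 h1 y2 h2 h
      simp only at h
      have hpow : y1 ^ d = y2 ^ d := mul_left_cancel₀ (ne_of_gt ha) h
      rcases lt_trichotomy y1 y2 with hlt | heq | hgt
      · exact absurd hpow (ne_of_lt (pow_lt_pow_left₀ hlt h1.1.le hdne))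
      · exact heq
      · exact absurd hpow.symm (ne_of_lt (pow_lt_pow_left₀ hgt h2.1.le hdne))
    rw [← himg, integral_image_eq_integral_abs_deriv_smul measurableSet_Ioo hderiv hinj]
    rw [hBdef, integral_Ioc_eq_integral_Ioo, ← integral_const_mul]
    refine setIntegral_congr_fun measurableSet_Ioo (fun y hy => ?_)
    have hy0 : 0 < y := hy.1
    have hayd : 0 < a * y ^ d := by positivity
    rw [smul_eq_mul, abs_of_pos (by positivity : (0:ℝ) < a * ((d:ℕ) * y ^ (d - 1)))]
    have h1 : (a * y ^ d) ^ ((1:ℝ) / d - 1) = a ^ ((1:ℝ) / d - 1) * y ^ ((1:ℝ) - d) := by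
      rw [Real.mul_rpow ha.le (pow_nonneg hy0.le d), ← Real.rpow_natCast y d,
        ← Real.rpow_mul hy0.le]
      congr 1
      field_simp
    have h2 : (y : ℝ) ^ (d - 1 : ℕ) = y ^ ((d:ℝ) - 1) := by
      rw [← Real.rpow_natCast y (d - 1), Nat.cast_sub hd, Nat.cast_one]
    have h3 : y ^ ((d:ℝ) - 1) * y ^ ((1:ℝ) - d) = 1 := by
      rw [← Real.rpow_add hy0]
      norm_num
    have h4 : a * a ^ ((1:ℝ) / d - 1) = a ^ ((1:ℝ) / d) := by
      nth_rewrite 1 [← Real.rpow_one a]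
      rw [← Real.rpow_add ha]
      ring_nf
    rw [h1, h2]
    calc a * ((d:ℕ) * y ^ ((d:ℝ) - 1)) *
          (Real.exp (-(a * y ^ d)) * (a ^ ((1:ℝ) / d - 1) * y ^ ((1:ℝ) - d)))
        = (d:ℝ) * (a * a ^ ((1:ℝ) / d - 1)) * ((y ^ ((d:ℝ) - 1) * y ^ ((1:ℝ) - d)) *
            Real.exp (-(a * y ^ d))) := by push_cast; ring
      _ = (d:ℝ) * a ^ ((1:ℝ) / d) * Real.exp (-(a * y ^ d)) := by rw [h3, h4, one_mul]
  rw [hmain, hsub]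
  have hpow : a ^ (-1 - 1 / (d:ℝ)) * a ^ ((1:ℝ) / d) = a⁻¹ := by
    rw [← Real.rpow_add ha]
    norm_num
    exact (Real.rpow_neg_one a)
  rw [show (2:ℝ) / (d:ℝ) ^ 2 * a ^ (-1 - 1 / (d:ℝ)) * ((d:ℝ) * a ^ ((1:ℝ) / d) * B)
      = 2 / (d:ℝ) ^ 2 * (a ^ (-1 - 1 / (d:ℝ)) * a ^ ((1:ℝ) / d)) * ((d:ℝ) * B) from by ring,
    hpow]
  field_simp
end

section
/- Let c be a real number with 0 < c ≤ 1 and let a ≥ 0. Then ∫_a^∞ e^{−s} s^{c−1} ds ≤ Γ(c) · e^{−a}, where Γ(c) = ∫_0^∞ e^{−s} s^{c−1} ds is the Gamma function. -/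
open MeasureTheory Real

theorem integral_exp_rpow_tail_le_Gamma_mul_exp
    (c : ℝ) (hc0 : 0 < c) (hc1 : c ≤ 1) (a : ℝ) (ha : 0 ≤ a) :
    (∫ s in Set.Ioi a, Real.exp (-s) * s ^ (c - 1)) ≤ Real.Gamma c * Real.exp (-a) := by
  have hG : IntegrableOn (fun x : ℝ => Real.exp (-x) * x ^ (c - 1)) (Set.Ioi 0) :=
    Real.GammaIntegral_convergent hc0
  have hemb : MeasurableEmbedding (fun x : ℝ => x + a) :=
    (MeasurableEquiv.addRight a).measurableEmbedding
  have hmp : MeasurePreserving (fun x : ℝ => x + a) volume volume :=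
    measurePreserving_add_right volume a
  have hpre : (fun x : ℝ => x + a) ⁻¹' Set.Ioi a = Set.Ioi 0 := by
    ext x; simp
  have htrans : (∫ s in Set.Ioi a, Real.exp (-s) * s ^ (c - 1))
      = ∫ t in Set.Ioi (0:ℝ), Real.exp (-(t + a)) * (t + a) ^ (c - 1) := by
    rw [← hmp.setIntegral_preimage_emb hemb (fun s => Real.exp (-s) * s ^ (c - 1)) (Set.Ioi a),
      hpre]
  have hbound : ∀ t ∈ Set.Ioi (0:ℝ),
      Real.exp (-(t + a)) * (t + a) ^ (c - 1) ≤ Real.exp (-a) * (Real.exp (-t) * t ^ (c - 1)) := by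
    intro t ht
    rw [Set.mem_Ioi] at ht
    have h1 : (t + a) ^ (c - 1) ≤ t ^ (c - 1) :=
      Real.rpow_le_rpow_of_nonpos ht (by linarith) (by linarith)
    have h2 : Real.exp (-(t + a)) = Real.exp (-a) * Real.exp (-t) := by
      rw [← Real.exp_add]; ring_nf
    rw [h2, mul_assoc]
    exact mul_le_mul_of_nonneg_left (mul_le_mul_of_nonneg_left h1 (Real.exp_nonneg _))
      (Real.exp_nonneg _)
  have hInt2 : IntegrableOn (fun t : ℝ => Real.exp (-a) * (Real.exp (-t) * t ^ (c - 1)))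
      (Set.Ioi 0) := hG.const_mul _
  have hInt1 : IntegrableOn (fun t : ℝ => Real.exp (-(t + a)) * (t + a) ^ (c - 1))
      (Set.Ioi 0) := by
    apply hInt2.mono'
    · apply Measurable.aestronglyMeasurable
      fun_prop
    · filter_upwards [ae_restrict_mem measurableSet_Ioi] with t ht
      rw [Set.mem_Ioi] at ht
      have hnn : (0:ℝ) ≤ Real.exp (-(t + a)) * (t + a) ^ (c - 1) := by positivity
      rw [Real.norm_eq_abs, abs_of_nonneg hnn]
      exact hbound t ht
  rw [htrans, Real.Gamma_eq_integral hc0, mul_comm]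
  calc (∫ t in Set.Ioi (0:ℝ), Real.exp (-(t + a)) * (t + a) ^ (c - 1))
      ≤ ∫ t in Set.Ioi (0:ℝ), Real.exp (-a) * (Real.exp (-t) * t ^ (c - 1)) :=
        setIntegral_mono_on hInt1 hInt2 measurableSet_Ioi hbound
    _ = Real.exp (-a) * ∫ t in Set.Ioi (0:ℝ), Real.exp (-t) * t ^ (c - 1) :=
        integral_const_mul _ _
end

section
/- Let K ⊆ ℝ^d be a compact convex set and r > 0 with r·B^d ⊆ K, where B^d is the closed unit ball centered at the origin. Let u, v ∈ ℝ^d be orthogonal unit vectors, let l(y) = vol₁({t ∈ ℝ : y + t·u ∈ K}) denote the chord length in direction u through y, and set ρ = sup{t ≥ 0 : ∃ s ∈ ℝ, t·v + s·u ∈ K}. Then ρ is finite and positive, and for every t with 0 ≤ t ≤ ρ one has l(t·v) ≥ 2r (1 − t/ρ). -/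
open MeasureTheory Metric

theorem chordLength_lower_bound_radial
    {d : ℕ} (K : Set (EuclideanSpace ℝ (Fin d)))
    (hKcp : IsCompact K) (hKcv : Convex ℝ K)
    (r : ℝ) (hr : 0 < r)
    (hrK : closedBall (0 : EuclideanSpace ℝ (Fin d)) r ⊆ K)
    (u v : EuclideanSpace ℝ (Fin d)) (hu : ‖u‖ = 1) (hv : ‖v‖ = 1)
    (huv : (inner ℝ u v : ℝ) = 0) :
    BddAbove {t : ℝ | 0 ≤ t ∧ ∃ s : ℝ, t • v + s • u ∈ K} ∧
    0 < sSup {t : ℝ | 0 ≤ t ∧ ∃ s : ℝ, t • v + s • u ∈ K} ∧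
    ∀ t : ℝ, 0 ≤ t → t ≤ sSup {t : ℝ | 0 ≤ t ∧ ∃ s : ℝ, t • v + s • u ∈ K} →
      2 * r * (1 - t / sSup {t : ℝ | 0 ≤ t ∧ ∃ s : ℝ, t • v + s • u ∈ K})
        ≤ (volume {τ : ℝ | t • v + τ • u ∈ K}).toReal := by
  obtain ⟨R, hR⟩ := hKcp.isBounded.subset_closedBall 0
  have hnorm : ∀ x ∈ K, ‖x‖ ≤ R := fun x hx => by
    simpa [mem_closedBall_zero_iff] using hR hx
  have hvu : (inner ℝ v u : ℝ) = 0 := by rw [real_inner_comm]; exact huv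
  have hvv : (inner ℝ v v : ℝ) = 1 := by
    rw [real_inner_self_eq_norm_sq, hv]; norm_num
  have huu : (inner ℝ u u : ℝ) = 1 := by
    rw [real_inner_self_eq_norm_sq, hu]; norm_num
  have hiv : ∀ t s : ℝ, (inner ℝ (t • v + s • u) v : ℝ) = t := fun t s => by
    rw [inner_add_left, real_inner_smul_left, real_inner_smul_left, hvv, huv]; ring
  have hiu : ∀ t s : ℝ, (inner ℝ (t • v + s • u) u : ℝ) = s := fun t s => by
    rw [inner_add_left, real_inner_smul_left, real_inner_smul_left, huu, hvu]; ring
  set S := {t : ℝ | 0 ≤ t ∧ ∃ s : ℝ, t • v + s • u ∈ K} with hSdef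
  have hbdd : BddAbove S := by
    refine ⟨R, fun t ht => ?_⟩
    obtain ⟨ht0, s, hx⟩ := ht
    have h := real_inner_le_norm (t • v + s • u) v
    rw [hiv t s, hv, mul_one] at h
    exact h.trans (hnorm _ hx)
  have hrS : r ∈ S := by
    refine ⟨hr.le, 0, ?_⟩
    apply hrK
    simp [mem_closedBall_zero_iff, norm_smul, abs_of_pos hr, hv]
  have hρpos : 0 < sSup S := lt_of_lt_of_le hr (le_csSup hbdd hrS)
  refine ⟨hbdd, hρpos, ?_⟩
  set ρ := sSup S with hρdef
  -- the sup is attained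
  have hC : IsCompact {p : ℝ × ℝ | p.1 • v + p.2 • u ∈ K} := by
    apply IsCompact.of_isClosed_subset (isCompact_Icc (a := (-R, -R)) (b := (R, R)))
    · exact hKcp.isClosed.preimage ((continuous_fst.smul continuous_const).add (continuous_snd.smul continuous_const))
    · rintro ⟨t, s⟩ hx
      have h1 := abs_real_inner_le_norm (t • v + s • u) v
      have h2 := abs_real_inner_le_norm (t • v + s • u) u
      rw [hiv t s, hv, mul_one] at h1
      rw [hiu t s, hu, mul_one] at h2
      have hn := hnorm _ hx
      have ht' := abs_le.mp (h1.trans hn)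
      have hs' := abs_le.mp (h2.trans hn)
      simp only [Set.mem_Icc, Prod.mk_le_mk]
      exact ⟨⟨ht'.1, hs'.1⟩, ht'.2, hs'.2⟩
  have hSeq : S = (Prod.fst '' {p : ℝ × ℝ | p.1 • v + p.2 • u ∈ K}) ∩ Set.Ici 0 := by
    ext t
    constructor
    · rintro ⟨ht0, s, hx⟩
      exact ⟨⟨(t, s), hx, rfl⟩, ht0⟩
    · rintro ⟨⟨⟨t', s⟩, hx, rfl⟩, ht0⟩
      exact ⟨ht0, s, hx⟩
  have hScomp : IsCompact S := by
    rw [hSeq]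
    exact (hC.image continuous_fst).inter_right isClosed_Ici
  obtain ⟨hρ0, s₀, hp⟩ := hScomp.sSup_mem ⟨r, hrS⟩
  intro t ht0 htρ
  set I := {τ : ℝ | t • v + τ • u ∈ K} with hIdef
  have hIfin : volume I ≠ ⊤ := by
    have hsub : I ⊆ Set.Icc (-R) R := by
      intro τ hτ
      have h2 := abs_real_inner_le_norm (t • v + τ • u) u
      rw [hiu t τ, hu, mul_one] at h2
      exact Set.mem_Icc.mpr (abs_le.mp (h2.trans (hnorm _ hτ)))
    exact ne_top_of_le_ne_top (by simp) (measure_mono hsub)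
  rcases eq_or_lt_of_le htρ with heq | hlt
  · rw [heq, div_self hρpos.ne']
    simp only [sub_self, mul_zero]
    exact ENNReal.toReal_nonneg
  · set lam := t / ρ with hlam
    have hlam1 : lam < 1 := (div_lt_one hρpos).mpr hlt
    have hlam0 : 0 ≤ lam := div_nonneg ht0 hρpos.le
    have h1lam : (0:ℝ) < 1 - lam := by linarith
    have hsub : Set.Icc (lam * s₀ - (1 - lam) * r) (lam * s₀ + (1 - lam) * r) ⊆ I := by
      intro τ hτ
      rw [Set.mem_Icc] at hτ
      set σ := (τ - lam * s₀) / (1 - lam) with hσ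
      have hσr : |σ| ≤ r := by
        rw [abs_div, abs_of_pos h1lam, div_le_iff₀ h1lam, abs_le]
        constructor <;> nlinarith [hτ.1, hτ.2]
      have hσK : σ • u ∈ K := by
        apply hrK
        rw [mem_closedBall_zero_iff, norm_smul, hu, mul_one]
        exact hσr
      have hconv := hKcv hσK hp (by linarith : (0:ℝ) ≤ 1 - lam) hlam0 (by ring)
      have e1 : lam * ρ = t := div_mul_cancel₀ t hρpos.ne'
      have e2 : (1 - lam) * σ + lam * s₀ = τ := by
        rw [hσ, mul_comm (1 - lam), div_mul_cancel₀ _ h1lam.ne']; ring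
      have hteq : (1 - lam) • (σ • u) + lam • (ρ • v + s₀ • u) = t • v + τ • u := by
        rw [smul_add, smul_smul, smul_smul, smul_smul, e1, ← e2, add_smul]
        abel
      rw [hteq] at hconv
      exact hconv
    have hvol : ENNReal.ofReal (2 * r * (1 - lam)) ≤ volume I := by
      have h := measure_mono (μ := volume) hsub
      rw [Real.volume_Icc] at h
      convert h using 2
      ring
    exact (ENNReal.ofReal_le_iff_le_toReal hIfin).mp hvol
end

section
/- Let d ≥ 2 be an integer, let K ⊆ ℝ^d be a compact convex set and r > 0 with r·B^d ⊆ K (B^d the closed unit ball centered at the origin), let u ∈ ℝ^d be a unit vector, and let λ > 0. Denote by κ_d the volume of B^d, by π the orthogonal projection of ℝ^d onto the hyperplane u^⊥, and by l(y) = vol₁({t ∈ ℝ : y + t·u ∈ K}) the chord length in direction u. Then ∫_{π(K)} e^{−λ κ_d l(y)^d} dy ≤ ((d−1)/(2d)) (λ κ_d)^{−1/d} Γ(1/d) r^{−1} · vol_{d−1}(π(K)), where the integral and vol_{d−1} are taken with respect to (d−1)-dimensional Lebesgue measure on u^⊥. -/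
open MeasureTheory Metric Set Module
open scoped Pointwise ENNReal NNReal

private lemma aux_bernoulli (n : ℕ) {θ : ℝ} (h0 : 0 ≤ θ) (h1 : θ ≤ 1) :
    1 ≤ n * (1 - θ) + θ ^ n := by
  induction n with
  | zero => simp
  | succ n ih =>
      have h2 : θ ^ n ≤ 1 := pow_le_one₀ h0 h1
      have h3 : (0:ℝ) ≤ θ ^ n := pow_nonneg h0 n
      push_cast
      push_cast at ih
      nlinarith [pow_succ θ n]

private lemma aux_integrable_pow_exp {d : ℕ} (hd : 1 ≤ d) {a : ℝ} (ha : 0 < a) (k : ℕ) :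
    IntegrableOn (fun s : ℝ => s ^ k * Real.exp (-(a * s ^ d))) (Ioi 0) := by
  have h := integrableOn_rpow_mul_exp_neg_mul_rpow (p := (d:ℝ)) (s := (k:ℝ)) (b := a)
    (lt_of_lt_of_le neg_one_lt_zero (Nat.cast_nonneg k)) (by exact_mod_cast hd) ha
  refine h.congr_fun (fun x hx => ?_) measurableSet_Ioi
  dsimp only
  rw [Real.rpow_natCast, Real.rpow_natCast, neg_mul]

private lemma aux_integrable_G {d : ℕ} (hd : 1 ≤ d) {a : ℝ} (ha : 0 < a) {c : ℝ} (hc : 0 ≤ c) :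
    IntegrableOn (fun s : ℝ => a * d * s ^ (d-1) * Real.exp (-(a * s ^ d))) (Ioi c) := by
  have h : IntegrableOn (fun s : ℝ => (a * d) * (s ^ (d-1) * Real.exp (-(a * s ^ d)))) (Ioi 0) :=
    (aux_integrable_pow_exp hd ha (d-1)).const_mul (a * d)
  have h2 : IntegrableOn (fun s : ℝ => a * d * s ^ (d-1) * Real.exp (-(a * s ^ d))) (Ioi 0) :=
    h.congr_fun (fun x _ => by ring) measurableSet_Ioi
  exact h2.mono_set (Ioi_subset_Ioi hc)

private lemma aux_ftc {d : ℕ} (hd : 1 ≤ d) {a : ℝ} (ha : 0 < a) {c : ℝ} (hc : 0 ≤ c) :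
    ∫ s in Ioi c, a * d * s ^ (d-1) * Real.exp (-(a * s ^ d)) = Real.exp (-(a * c ^ d)) := by
  have hderiv : ∀ x ∈ Ici c, HasDerivAt (fun s : ℝ => -Real.exp (-(a * s ^ d)))
      (a * d * x ^ (d-1) * Real.exp (-(a * x ^ d))) x := by
    intro x _
    have h1 : HasDerivAt (fun s : ℝ => s ^ d) ((d:ℝ) * x ^ (d-1)) x := hasDerivAt_pow d x
    have h2 : HasDerivAt (fun s : ℝ => -(a * s ^ d)) (-(a * ((d:ℝ) * x ^ (d-1)))) x :=
      (h1.const_mul a).neg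
    have h3 : HasDerivAt (fun s : ℝ => -Real.exp (-(a * s ^ d)))
        (-(Real.exp (-(a * x ^ d)) * -(a * ((d:ℝ) * x ^ (d-1))))) x := h2.exp.neg
    convert h3 using 1
    ring
  have htend : Filter.Tendsto (fun s : ℝ => -Real.exp (-(a * s ^ d))) Filter.atTop (nhds 0) := by
    rw [show (0:ℝ) = -0 by norm_num]
    refine Filter.Tendsto.neg ?_
    refine Real.tendsto_exp_atBot.comp ?_
    refine Filter.tendsto_neg_atBot_iff.mpr ?_
    exact Filter.Tendsto.const_mul_atTop ha (Filter.tendsto_pow_atTop (by omega))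
  have := integral_Ioi_of_hasDerivAt_of_tendsto' hderiv (aux_integrable_G hd ha hc) htend
  rw [this]
  ring

private lemma aux_value {d : ℕ} (hd : 2 ≤ d) {a r : ℝ} (ha : 0 < a) (hr : 0 < r) :
    ∫ s in Ioi (0:ℝ), (a * d * s ^ (d-1) * Real.exp (-(a * s ^ d))) * (((d:ℝ)-1) * s / (2*r))
      = ((d:ℝ)-1)/(2*(d:ℝ)) * a ^ (-(1/(d:ℝ))) * Real.Gamma (1/(d:ℝ)) * r⁻¹ := by
  have hd0 : (0:ℝ) < (d:ℝ) := by positivity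
  have hd0' : (d:ℝ) ≠ 0 := hd0.ne'
  have step1 : ∫ s in Ioi (0:ℝ),
        (a * d * s ^ (d-1) * Real.exp (-(a * s ^ d))) * (((d:ℝ)-1) * s / (2*r))
      = ∫ s in Ioi (0:ℝ),
        (a * d * ((d:ℝ)-1) / (2*r)) * (s ^ ((d:ℝ)) * Real.exp (-a * s ^ ((d:ℝ)))) := by
    refine setIntegral_congr_fun measurableSet_Ioi (fun s hs => ?_)
    have hs0 : (0:ℝ) ≤ s := (mem_Ioi.mp hs).le
    rw [Real.rpow_natCast]
    have hpow : s ^ d = s ^ (d-1) * s := by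
      rw [← pow_succ]; congr 1; omega
    rw [hpow, neg_mul]
    ring
  rw [step1, MeasureTheory.integral_const_mul,
    integral_rpow_mul_exp_neg_mul_rpow hd0 (lt_of_lt_of_le neg_one_lt_zero hd0.le) ha]
  have hΓ : Real.Gamma (((d:ℝ)+1)/(d:ℝ)) = (1/(d:ℝ)) * Real.Gamma (1/(d:ℝ)) := by
    have h1 : ((d:ℝ)+1)/(d:ℝ) = 1/(d:ℝ) + 1 := by field_simp; ring
    rw [h1, Real.Gamma_add_one (by positivity)]
  have ha' : a * a ^ (-((d:ℝ)+1)/(d:ℝ)) = a ^ (-(1/(d:ℝ))) := by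
    nth_rewrite 1 [show a = a ^ (1:ℝ) by rw [Real.rpow_one]]
    rw [← Real.rpow_add ha]
    congr 1
    field_simp
    ring
  rw [hΓ]
  rw [← ha']
  field_simp

private lemma aux_main {E : Type*} [MeasurableSpace E] (ν : Measure E) {A : Set E}
    (hfin : ν A ≠ ∞) {d : ℕ} (hd : 2 ≤ d) {a r : ℝ} (ha : 0 < a) (hr : 0 < r)
    {l : E → ℝ} (hlm : Measurable l) (hln : ∀ y, 0 ≤ l y)
    (hdist : ∀ s : ℝ, 0 < s →
      ν ({y | l y < s} ∩ A) ≤ ENNReal.ofReal (((d:ℝ)-1)*s/(2*r)) * ν A) :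
    ∫ y in A, Real.exp (-(a * l y ^ d)) ∂ν
      ≤ ((d:ℝ)-1)/(2*(d:ℝ)) * a ^ (-(1/(d:ℝ))) * Real.Gamma (1/(d:ℝ)) * r⁻¹ * (ν A).toReal := by
  have hd1 : 1 ≤ d := by omega
  set ρ := ν.restrict A with hρdef
  haveI : IsFiniteMeasure ρ := ⟨by rw [hρdef, Measure.restrict_apply_univ]; exact hfin.lt_top⟩
  set G : ℝ → ℝ := fun s => a * d * s ^ (d-1) * Real.exp (-(a * s ^ d)) with hGdef
  have hGm : Measurable G := by fun_prop
  have hGnn : ∀ s : ℝ, 0 ≤ s → 0 ≤ G s := by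
    intro s hs
    rw [hGdef]
    positivity
  set C : ℝ := ((d:ℝ)-1)/(2*(d:ℝ)) * a ^ (-(1/(d:ℝ))) * Real.Gamma (1/(d:ℝ)) * r⁻¹ with hCdef
  have hC0 : 0 ≤ C := by
    rw [hCdef]
    have hΓ : 0 < Real.Gamma (1/(d:ℝ)) := Real.Gamma_pos_of_pos (by positivity)
    have h1 : (0:ℝ) ≤ (d:ℝ) - 1 := by
      have : (2:ℝ) ≤ (d:ℝ) := by exact_mod_cast hd
      linarith
    positivity
  have hfm : Measurable fun y => Real.exp (-(a * l y ^ d)) := by fun_prop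
  have step0 : ∫ y in A, Real.exp (-(a * l y ^ d)) ∂ν
      = (∫⁻ y, ENNReal.ofReal (Real.exp (-(a * l y ^ d))) ∂ρ).toReal := by
    rw [hρdef]
    exact integral_eq_lintegral_of_nonneg_ae
      (Filter.Eventually.of_forall fun y => (Real.exp_pos _).le) hfm.aestronglyMeasurable
  set F : E → ℝ → ℝ≥0∞ := fun y s => (Ioi (l y)).indicator (fun s => ENNReal.ofReal (G s)) s
    with hFdef
  have step1 : ∀ y, ENNReal.ofReal (Real.exp (-(a * l y ^ d)))
      = ∫⁻ s in Ioi 0, F y s := by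
    intro y
    rw [← aux_ftc hd1 ha (hln y),
      ofReal_integral_eq_lintegral_ofReal (aux_integrable_G hd1 ha (hln y))
        ((ae_restrict_iff' measurableSet_Ioi).mpr (Filter.Eventually.of_forall
          (fun s hs => hGnn s ((hln y).trans (le_of_lt hs)))))]
    rw [hFdef]
    simp only []
    rw [lintegral_indicator measurableSet_Ioi, Measure.restrict_restrict measurableSet_Ioi,
      Ioi_inter_Ioi, sup_eq_left.mpr (hln y)]
  have hFm : Measurable (Function.uncurry F) := by
    have : Function.uncurry F = fun p : E × ℝ =>
        Set.indicator {q : E × ℝ | l q.1 < q.2} (fun q => ENNReal.ofReal (G q.2)) p := by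
      funext p
      simp only [Function.uncurry, hFdef, Set.indicator_apply, mem_Ioi, mem_setOf_eq]
    rw [this]
    exact Measurable.indicator ((ENNReal.measurable_ofReal.comp hGm).comp measurable_snd)
      (measurableSet_lt (hlm.comp measurable_fst) measurable_snd)
  have step3 : (∫⁻ y, ENNReal.ofReal (Real.exp (-(a * l y ^ d))) ∂ρ)
      = ∫⁻ s in Ioi 0, ∫⁻ y, F y s ∂ρ := by
    simp_rw [step1]
    exact lintegral_lintegral_swap hFm.aemeasurable
  have step4 : ∀ s : ℝ, (∫⁻ y, F y s ∂ρ) = ENNReal.ofReal (G s) * ρ {y | l y < s} := by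
    intro s
    have heq : (fun y => F y s) = {y | l y < s}.indicator (fun _ => ENNReal.ofReal (G s)) := by
      funext y
      simp only [hFdef, Set.indicator_apply, mem_Ioi, mem_setOf_eq]
    rw [heq, lintegral_indicator_const
      (show MeasurableSet {y | l y < s} from hlm measurableSet_Iio)]
  have step5 : (∫⁻ s in Ioi 0, ∫⁻ y, F y s ∂ρ)
      ≤ ∫⁻ s in Ioi 0, ENNReal.ofReal (G s * (((d:ℝ)-1)*s/(2*r))) * ν A := by
    refine setLIntegral_mono' measurableSet_Ioi (fun s hs => ?_)
    rw [step4 s]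
    have hρs : ρ {y | l y < s} ≤ ENNReal.ofReal (((d:ℝ)-1)*s/(2*r)) * ν A := by
      rw [hρdef, Measure.restrict_apply
        (show MeasurableSet {y | l y < s} from hlm measurableSet_Iio)]
      exact hdist s hs
    calc ENNReal.ofReal (G s) * ρ {y | l y < s}
        ≤ ENNReal.ofReal (G s) * (ENNReal.ofReal (((d:ℝ)-1)*s/(2*r)) * ν A) :=
          mul_le_mul_right hρs _
      _ = ENNReal.ofReal (G s * (((d:ℝ)-1)*s/(2*r))) * ν A := by
          rw [← mul_assoc, ← ENNReal.ofReal_mul (hGnn s (le_of_lt hs))]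
  have hint : IntegrableOn (fun s : ℝ => G s * (((d:ℝ)-1)*s/(2*r))) (Ioi 0) := by
    have h1 : IntegrableOn
        (fun s : ℝ => (a * d * (((d:ℝ)-1)/(2*r))) * (s ^ d * Real.exp (-(a * s ^ d))))
        (Ioi 0) := (aux_integrable_pow_exp hd1 ha d).const_mul _
    refine h1.congr_fun (fun x _ => ?_) measurableSet_Ioi
    have hpow : x ^ d = x ^ (d-1) * x := by rw [← pow_succ]; congr 1; omega
    rw [hGdef]
    simp only []
    rw [hpow]
    ring
  have step6 : (∫⁻ s in Ioi 0, ENNReal.ofReal (G s * (((d:ℝ)-1)*s/(2*r))))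
      = ENNReal.ofReal C := by
    rw [← ofReal_integral_eq_lintegral_ofReal hint
      ((ae_restrict_iff' measurableSet_Ioi).mpr (Filter.Eventually.of_forall (fun s hs => by
        have h1 : (0:ℝ) ≤ (d:ℝ) - 1 := by
          have : (2:ℝ) ≤ (d:ℝ) := by exact_mod_cast hd
          linarith
        have := hGnn s (le_of_lt hs)
        have hs0 : (0:ℝ) ≤ s := le_of_lt hs
        positivity)))]
    rw [hCdef, ← aux_value hd ha hr]
  have final : (∫⁻ y, ENNReal.ofReal (Real.exp (-(a * l y ^ d))) ∂ρ)
      ≤ ENNReal.ofReal C * ν A := by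
    rw [step3]
    refine step5.trans ?_
    have hmul : Measurable fun s : ℝ => G s * (((d:ℝ)-1)*s/(2*r)) := hGm.mul (by fun_prop)
    rw [lintegral_mul_const _ hmul.ennreal_ofReal, step6]
  rw [step0]
  calc (∫⁻ y, ENNReal.ofReal (Real.exp (-(a * l y ^ d))) ∂ρ).toReal
      ≤ (ENNReal.ofReal C * ν A).toReal :=
        ENNReal.toReal_mono (ENNReal.mul_ne_top ENNReal.ofReal_ne_top hfin) final
    _ = C * (ν A).toReal := by rw [ENNReal.toReal_mul, ENNReal.toReal_ofReal hC0]

/-- Orthogonal projection of `ℝ^d` onto the hyperplane `u^⊥`, viewed as a map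
into the ambient space. -/
noncomputable def projHyperplane {d : ℕ} (u : EuclideanSpace ℝ (Fin d)) :
    EuclideanSpace ℝ (Fin d) → EuclideanSpace ℝ (Fin d) :=
  fun x => (Submodule.orthogonalProjection (Submodule.span ℝ {u})ᗮ x : EuclideanSpace ℝ (Fin d))

theorem integral_exp_chordLength_projection_bound
    {d : ℕ} (hd : 2 ≤ d) (K : Set (EuclideanSpace ℝ (Fin d)))
    (hKcp : IsCompact K) (hKcv : Convex ℝ K)
    (r : ℝ) (hr : 0 < r)
    (hrK : closedBall (0 : EuclideanSpace ℝ (Fin d)) r ⊆ K)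
    (u : EuclideanSpace ℝ (Fin d)) (hu : ‖u‖ = 1)
    (lam : ℝ) (hlam : 0 < lam) :
    (∫ y in projHyperplane u '' K,
        Real.exp (-(lam * (volume (closedBall (0 : EuclideanSpace ℝ (Fin d)) 1)).toReal
          * (volume {t : ℝ | y + t • u ∈ K}).toReal ^ d)) ∂(μH[(d : ℝ) - 1]))
      ≤ ((d : ℝ) - 1) / (2 * d)
          * (lam * (volume (closedBall (0 : EuclideanSpace ℝ (Fin d)) 1)).toReal) ^ (-(1 / (d : ℝ)))
          * Real.Gamma (1 / d) * r⁻¹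
          * (μH[(d : ℝ) - 1] (projHyperplane u '' K)).toReal := by
  have hu0 : u ≠ 0 := by intro h; rw [h, norm_zero] at hu; norm_num at hu
  have hd1 : (1:ℝ) ≤ (d:ℝ) - 1 := by
    have : (2:ℝ) ≤ (d:ℝ) := by exact_mod_cast hd
    linarith
  have he0 : (0:ℝ) ≤ (d:ℝ) - 1 := by linarith
  have hcast : ((d-1 : ℕ):ℝ) = (d:ℝ)-1 := by
    push_cast [Nat.cast_sub (by omega : 1 ≤ d)]
    ring
  have hκpos : 0 < (volume (closedBall (0 : EuclideanSpace ℝ (Fin d)) 1)).toReal := by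
    refine ENNReal.toReal_pos ?_ ?_
    · exact (measure_closedBall_pos volume (0 : EuclideanSpace ℝ (Fin d)) one_pos).ne'
    · exact measure_closedBall_lt_top.ne
  have ha : 0 < lam * (volume (closedBall (0 : EuclideanSpace ℝ (Fin d)) 1)).toReal :=
    mul_pos hlam hκpos
  -- boundedness of K and chords
  obtain ⟨R, hKR⟩ : ∃ R, K ⊆ closedBall 0 R := hKcp.isBounded.subset_closedBall 0
  have hchord_sub : ∀ y : EuclideanSpace ℝ (Fin d),
      {t : ℝ | y + t • u ∈ K} ⊆ Icc (-(‖y‖+R)) (‖y‖+R) := by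
    intro y t ht
    have h1 : ‖y + t • u‖ ≤ R := by
      have := hKR ht
      rwa [mem_closedBall_zero_iff] at this
    have h2 : |t| = ‖t • u‖ := by rw [norm_smul, hu, mul_one, Real.norm_eq_abs]
    have h3 : ‖t • u‖ ≤ ‖y + t • u‖ + ‖y‖ := by
      calc ‖t • u‖ = ‖(y + t • u) - y‖ := by rw [add_sub_cancel_left]
        _ ≤ ‖y + t • u‖ + ‖y‖ := norm_sub_le _ _
    have : |t| ≤ ‖y‖ + R := by rw [h2]; linarith
    exact abs_le.mp this
  have hLfin : ∀ y : EuclideanSpace ℝ (Fin d), volume {t : ℝ | y + t • u ∈ K} ≠ ∞ := by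
    intro y
    refine ne_top_of_le_ne_top ?_ (measure_mono (hchord_sub y))
    exact (measure_Icc_lt_top).ne
  have hL_meas : Measurable (fun y : EuclideanSpace ℝ (Fin d) =>
      volume {t : ℝ | y + t • u ∈ K}) := by
    have hC : MeasurableSet {p : EuclideanSpace ℝ (Fin d) × ℝ | p.1 + p.2 • u ∈ K} := by
      refine (IsClosed.preimage ?_ hKcp.isClosed).measurableSet
      exact continuous_fst.add (continuous_snd.smul continuous_const)
    exact measurable_measure_prodMk_left hC
  have hl_meas : Measurable (fun y : EuclideanSpace ℝ (Fin d) =>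
      (volume {t : ℝ | y + t • u ∈ K}).toReal) :=
    ENNReal.measurable_toReal.comp hL_meas
  -- basic facts about the projection S of K
  have hproj_cont : Continuous (projHyperplane u) :=
    continuous_subtype_val.comp (Submodule.orthogonalProjection (Submodule.span ℝ {u})ᗮ).continuous
  have hS_cpt : IsCompact (projHyperplane u '' K) := hKcp.image hproj_cont
  have hproj_lin : IsLinearMap ℝ (projHyperplane u) := by
    constructor <;> intros <;> simp [projHyperplane]
  have hS_cvx : Convex ℝ (projHyperplane u '' K) := hKcv.is_linear_image hproj_lin
  have h0K : (0 : EuclideanSpace ℝ (Fin d)) ∈ K := hrK (mem_closedBall_self hr.le)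
  have h0S : (0 : EuclideanSpace ℝ (Fin d)) ∈ projHyperplane u '' K :=
    ⟨0, h0K, by simp [projHyperplane]⟩
  have hSW : ∀ y ∈ projHyperplane u '' K,
      y ∈ ((Submodule.span ℝ {u})ᗮ : Submodule ℝ (EuclideanSpace ℝ (Fin d))) := by
    rintro y ⟨x, -, rfl⟩
    exact (Submodule.orthogonalProjection (Submodule.span ℝ {u})ᗮ x).2
  -- chords over S are nonempty
  have hchord_ne : ∀ z ∈ projHyperplane u '' K, ∃ t : ℝ, z + t • u ∈ K := by
    rintro z ⟨k, hk, rfl⟩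
    set W : Submodule ℝ (EuclideanSpace ℝ (Fin d)) := (Submodule.span ℝ {u})ᗮ with hWdef
    have hdecomp := Submodule.starProjection_add_starProjection_orthogonal (K := W) k
    have hWo : Wᗮ = Submodule.span ℝ {u} := Submodule.orthogonal_orthogonal _
    obtain ⟨v, hv1, hv2⟩ : ∃ v : EuclideanSpace ℝ (Fin d), v ∈ Wᗮ ∧
        (Submodule.orthogonalProjection W k : EuclideanSpace ℝ (Fin d)) + v = k :=
      ⟨_, (Submodule.orthogonalProjection Wᗮ k).2, hdecomp⟩
    rw [hWo] at hv1
    obtain ⟨c, hc⟩ := Submodule.mem_span_singleton.mp hv1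
    refine ⟨c, ?_⟩
    have : projHyperplane u k + c • u = k := by
      rw [projHyperplane, hc]
      exact hv2
    rw [this]
    exact hk
  -- finiteness of the Hausdorff measure of S
  have hm_fin : μH[(d:ℝ)-1] (projHyperplane u '' K) ≠ ∞ := by
    set S := projHyperplane u '' K with hSdef
    set W : Submodule ℝ (EuclideanSpace ℝ (Fin d)) := (Submodule.span ℝ {u})ᗮ with hWdef
    have hrank : finrank ℝ W = d - 1 := by
      rw [hWdef]
      have h1 := Submodule.finrank_add_finrank_orthogonal
        (K := (Submodule.span ℝ {u} : Submodule ℝ (EuclideanSpace ℝ (Fin d))))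
      rw [finrank_span_singleton hu0, finrank_euclideanSpace_fin] at h1
      omega
    have hn : ((finrank ℝ W : ℕ):ℝ) = (d:ℝ)-1 := by
      rw [hrank]
      push_cast [Nat.cast_sub (by omega : 1 ≤ d)]
      ring
    set b := stdOrthonormalBasis ℝ W with hbdef
    set g : EuclideanSpace ℝ (Fin (finrank ℝ W)) →ₗᵢ[ℝ] EuclideanSpace ℝ (Fin d) :=
      W.subtypeₗᵢ.comp b.repr.symm.toLinearIsometry with hgdef
    have hS_sub_range : S ⊆ range g := by
      intro y hy
      exact ⟨b.repr ⟨y, hSW y hy⟩, by simp [hgdef]⟩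
    have himg : g '' (g ⁻¹' S) = S := Set.image_preimage_eq_of_subset hS_sub_range
    have hT_cpt : IsCompact (g ⁻¹' S) := by
      refine Metric.isCompact_of_isClosed_isBounded
        (hS_cpt.isClosed.preimage g.continuous) ?_
      obtain ⟨R', hR'⟩ := hS_cpt.isBounded.subset_closedBall 0
      refine Metric.isBounded_closedBall
        (x := (0 : EuclideanSpace ℝ (Fin (finrank ℝ W)))) (r := R') |>.subset ?_
      intro x hx
      rw [mem_closedBall_zero_iff, ← g.norm_map]
      exact mem_closedBall_zero_iff.mp (hR' hx)
    have hfin : μH[((finrank ℝ (EuclideanSpace ℝ (Fin (finrank ℝ W)))):ℝ)] (g ⁻¹' S) < ∞ :=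
      hT_cpt.measure_lt_top
    rw [finrank_euclideanSpace_fin] at hfin
    calc μH[(d:ℝ)-1] S = μH[(d:ℝ)-1] (g '' (g ⁻¹' S)) := by rw [himg]
      _ = μH[(d:ℝ)-1] (g ⁻¹' S) := g.isometry.hausdorffMeasure_image (Or.inl he0) _
      _ ≠ ∞ := by rw [← hn]; exact hfin.ne
  -- the distribution estimate
  have claim2 : ∀ s : ℝ, 0 < s →
      μH[(d:ℝ)-1] ({y | (volume {t : ℝ | y + t • u ∈ K}).toReal < s} ∩ (projHyperplane u '' K))
        ≤ ENNReal.ofReal (((d:ℝ)-1) * s / (2*r)) * μH[(d:ℝ)-1] (projHyperplane u '' K) := by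
    set S := projHyperplane u '' K with hSdef
    intro s hs
    by_cases hcase : s < 2*r
    swap
    · have h1 : (1:ℝ) ≤ ((d:ℝ)-1) * s / (2*r) := by
        rw [le_div_iff₀ (by positivity)]
        push_neg at hcase
        nlinarith
      calc μH[(d:ℝ)-1] ({y | (volume {t : ℝ | y + t • u ∈ K}).toReal < s} ∩ S)
          ≤ μH[(d:ℝ)-1] S := measure_mono inter_subset_right
        _ = 1 * μH[(d:ℝ)-1] S := (one_mul _).symm
        _ ≤ ENNReal.ofReal (((d:ℝ)-1) * s / (2*r)) * μH[(d:ℝ)-1] S :=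
            mul_le_mul_left (ENNReal.one_le_ofReal.mpr h1) _
    · set θ : ℝ := 1 - s/(2*r) with hθdef
      have h2r : (0:ℝ) < 2*r := by positivity
      have hθ0 : 0 < θ := by
        have : s/(2*r) < 1 := (div_lt_one h2r).mpr hcase
        rw [hθdef]; linarith
      have hθ1 : θ < 1 := by
        have : 0 < s/(2*r) := by positivity
        rw [hθdef]; linarith
      have h1θ : 0 < 1 - θ := by linarith
      have h1θeq : 1 - θ = s/(2*r) := by rw [hθdef]; ring
      have hθS : θ • S ⊆ S := by
        rintro _ ⟨z, hz, rfl⟩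
        have := hS_cvx h0S hz (by linarith : (0:ℝ) ≤ 1-θ) hθ0.le (by ring)
        simpa using this
      have hkey : ∀ y ∈ θ • S, s ≤ (volume {t : ℝ | y + t • u ∈ K}).toReal := by
        rintro _ ⟨z, hz, rfl⟩
        obtain ⟨t₀, ht₀⟩ := hchord_ne z hz
        have hIcc : Icc (θ*t₀ - (1-θ)*r) (θ*t₀ + (1-θ)*r) ⊆ {t : ℝ | θ•z + t•u ∈ K} := by
          intro w hw
          set wt := (w - θ*t₀)/(1-θ) with hwtdef
          have habs : |w - θ*t₀| ≤ (1-θ)*r :=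
            abs_le.mpr ⟨by linarith [hw.1], by linarith [hw.2]⟩
          have hwtr : |wt| ≤ r := by
            rw [hwtdef, abs_div, abs_of_pos h1θ, div_le_iff₀ h1θ]
            linarith
          have hwtK : wt • u ∈ K := by
            refine hrK ?_
            rw [mem_closedBall_zero_iff, norm_smul, hu, mul_one, Real.norm_eq_abs]
            exact hwtr
          have hcomb : θ•(z + t₀•u) + (1-θ)•(wt•u) ∈ K :=
            hKcv ht₀ hwtK hθ0.le h1θ.le (by ring)
          have heq : θ•(z + t₀•u) + (1-θ)•(wt•u) = θ•z + w•u := by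
            have hwteq : (1-θ)*wt = w - θ*t₀ := by rw [hwtdef]; field_simp
            rw [smul_add, smul_smul, smul_smul, hwteq, add_assoc, ← add_smul]
            congr 2
            ring
          show θ • z + w • u ∈ K
          rw [← heq]
          exact hcomb
        have hvol : ENNReal.ofReal s ≤ volume {t : ℝ | θ•z + t•u ∈ K} := by
          calc ENNReal.ofReal s
              = volume (Icc (θ*t₀ - (1-θ)*r) (θ*t₀ + (1-θ)*r)) := by
                rw [Real.volume_Icc]
                congr 1
                rw [show θ*t₀ + (1-θ)*r - (θ*t₀ - (1-θ)*r) = (1-θ)*(2*r) by ring, h1θeq]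
                field_simp
            _ ≤ volume {t : ℝ | θ•z + t•u ∈ K} := measure_mono hIcc
        exact (ENNReal.ofReal_le_iff_le_toReal (hLfin _)).mp hvol
      have hsub2 : {y | (volume {t : ℝ | y + t • u ∈ K}).toReal < s} ∩ S ⊆ S \ θ • S := by
        rintro y ⟨hy1, hy2⟩
        exact ⟨hy2, fun hy3 => absurd hy1 (not_lt.mpr (hkey y hy3))⟩
      have hθS_cpt : IsCompact (θ • S) := by
        rw [show θ • S = (fun x => θ • x) '' S from rfl]
        exact hS_cpt.image (continuous_const_smul θ)
      have hθSfin : μH[(d:ℝ)-1] (θ • S) ≠ ∞ :=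
        ne_top_of_le_ne_top hm_fin (measure_mono hθS)
      have hsmul : μH[(d:ℝ)-1] (θ • S) = (‖θ‖₊ ^ ((d:ℝ)-1)) • μH[(d:ℝ)-1] S :=
        MeasureTheory.Measure.hausdorffMeasure_smul₀ he0 hθ0.ne' S
      have hc : ((‖θ‖₊ ^ ((d:ℝ)-1) : ℝ≥0) : ℝ≥0∞) = ENNReal.ofReal (θ ^ (d-1 : ℕ)) := by
        rw [Real.nnnorm_of_nonneg hθ0.le, ← hcast, NNReal.rpow_natCast]
        rw [ENNReal.ofReal]
        congr 1
        apply NNReal.coe_injective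
        push_cast
        rw [Real.coe_toNNReal _ (by positivity)]
      have hcoef : (1:ℝ≥0∞) ≤ ENNReal.ofReal (((d:ℝ)-1) * s / (2*r))
          + (‖θ‖₊ ^ ((d:ℝ)-1) : ℝ≥0) := by
        rw [hc, ← ENNReal.ofReal_add (by positivity) (by positivity)]
        refine ENNReal.one_le_ofReal.mpr ?_
        have hb := aux_bernoulli (d-1) hθ0.le hθ1.le
        rw [hcast] at hb
        calc (1:ℝ) ≤ ((d:ℝ)-1) * (1-θ) + θ ^ (d-1:ℕ) := hb
          _ = ((d:ℝ)-1) * s / (2*r) + θ ^ (d-1:ℕ) := by rw [h1θeq]; ring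
      calc μH[(d:ℝ)-1] ({y | (volume {t : ℝ | y + t • u ∈ K}).toReal < s} ∩ S)
          ≤ μH[(d:ℝ)-1] (S \ θ • S) := measure_mono hsub2
        _ = μH[(d:ℝ)-1] S - μH[(d:ℝ)-1] (θ • S) :=
            measure_diff hθS hθS_cpt.isClosed.measurableSet.nullMeasurableSet hθSfin
        _ ≤ ENNReal.ofReal (((d:ℝ)-1) * s / (2*r)) * μH[(d:ℝ)-1] S := by
            rw [tsub_le_iff_right, hsmul, ENNReal.smul_def, smul_eq_mul, ← add_mul]
            calc μH[(d:ℝ)-1] S = 1 * μH[(d:ℝ)-1] S := (one_mul _).symm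
              _ ≤ _ := mul_le_mul_left hcoef _
  exact aux_main μH[(d:ℝ)-1] hm_fin hd ha hr hl_meas
    (fun y => ENNReal.toReal_nonneg) claim2
end
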